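/- arXiv:0910.0405 — 10 statements merged into one kernel-verified Lean document; each statement's English description precedes it below -/
import Mathlib

section
/- For every ρ ∈ (−1, 1), the quadrant probability of the standard bivariate normal distribution with correlation ρ satisfies ∫₀^∞ ∫₀^∞ φ_ρ(x, y) dx dy = (1/(2π)) · (π/2 + arctan(ρ / √(1 − ρ²))). -/
open Real Set MeasureTheory Filter

lemma aux_xint {a : ℝ} (ha : 0 < a) :
    ∫ x in Ioi (0:ℝ), x * Real.exp (-(a * x^2)) = 1/(2*a) := by
  have h : ∀ x ∈ Ici (0:ℝ),
      HasDerivAt (fun x : ℝ => -Real.exp (-(a*x^2))/(2*a)) (x * Real.exp (-(a*x^2))) x := by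
    intro x _
    have h1 : HasDerivAt (fun x : ℝ => -(a*x^2)) (-(a*(2*x))) x := by
      simpa [Pi.neg_def] using ((hasDerivAt_pow 2 x).const_mul a).neg
    have h2 := (h1.exp).neg.div_const (2*a)
    refine h2.congr_deriv ?_
    have ha' : a ≠ 0 := ha.ne'
    field_simp
  rw [integral_Ioi_of_hasDerivAt_of_nonneg' h
    (fun x hx => mul_nonneg (le_of_lt hx) (Real.exp_nonneg _))
    (by
      have : Tendsto (fun x : ℝ => -(a*x^2)) atTop atBot := by
        apply tendsto_neg_atBot_iff.mpr
        exact (tendsto_pow_atTop (by norm_num)).const_mul_atTop ha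
      have := (Real.tendsto_exp_atBot.comp this).neg.div_const (2*a)
      simpa using this)]
  simp
  ring

lemma aux_vint {ρ s : ℝ} (hs : 0 < s) :
    ∫ v in Ioi (0:ℝ), s^2 / ((v-ρ)^2 + s^2) = s * (π/2 + Real.arctan (ρ/s)) := by
  have h : ∀ v ∈ Ici (0:ℝ),
      HasDerivAt (fun v : ℝ => s * Real.arctan ((v-ρ)/s)) (s^2/((v-ρ)^2+s^2)) v := by
    intro v _
    have h1 : HasDerivAt (fun v : ℝ => (v-ρ)/s) (1/s) v := by
      simpa using ((hasDerivAt_id v).sub_const ρ).div_const s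
    have h2 := ((Real.hasDerivAt_arctan ((v-ρ)/s)).comp v h1).const_mul s
    refine h2.congr_deriv ?_
    have hne : (1:ℝ) + ((v-ρ)/s)^2 ≠ 0 := by positivity
    field_simp
    ring
  rw [integral_Ioi_of_hasDerivAt_of_nonneg' h
    (fun v hv => by positivity)
    (by
      have h3 : Tendsto (fun v : ℝ => (v-ρ)/s) atTop atTop := by
        apply Tendsto.atTop_div_const hs
        simpa [sub_eq_add_neg] using tendsto_atTop_add_const_right atTop (-ρ) tendsto_id
      have := ((Real.tendsto_arctan_atTop.mono_right nhdsWithin_le_nhds).comp h3).const_mul s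
      exact this)]
  simp [Real.arctan_neg, neg_div]
  ring

theorem bivariate_normal_quadrant_probability
    (ρ : ℝ) (hρ : ρ ∈ Set.Ioo (-1 : ℝ) 1) :
    ∫ x in Set.Ioi (0:ℝ), ∫ y in Set.Ioi (0:ℝ),
      (1 / (2 * π * Real.sqrt (1 - ρ^2))) *
        Real.exp (-(x^2 - 2*ρ*x*y + y^2) / (2 * (1 - ρ^2)))
    = (1 / (2 * π)) * (π / 2 + Real.arctan (ρ / Real.sqrt (1 - ρ^2))) := by
  obtain ⟨h1, h2⟩ := hρ
  have hpos : (0:ℝ) < 1 - ρ^2 := by nlinarith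
  set s : ℝ := Real.sqrt (1 - ρ^2) with hsdef
  have hs : 0 < s := Real.sqrt_pos.mpr hpos
  have hs2 : s^2 = 1 - ρ^2 := Real.sq_sqrt hpos.le
  set f : ℝ × ℝ → ℝ := fun z => z.1 * Real.exp (-((((z.2-ρ)^2+s^2)/(2*s^2)) * z.1^2)) with hfdef
  have hfc : Continuous f := by fun_prop
  have hfeqx : ∀ x : ℝ, (fun v => f (x, v))
      = fun v => (x * Real.exp (-(x^2/2))) * Real.exp (-(x^2/(2*s^2)) * (v - ρ)^2) := by
    intro x
    funext v
    simp only [hfdef, mul_assoc, ← Real.exp_add]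
    congr 2
    field_simp
    ring
  have hsec : ∀ x : ℝ, 0 < x → Integrable (fun v => f (x, v)) volume := by
    intro x hx
    have hb : 0 < x^2/(2*s^2) := by positivity
    rw [hfeqx x]
    exact ((integrable_exp_neg_mul_sq hb).comp_sub_right ρ).const_mul _
  have hval : ∀ x : ℝ, 0 < x → (∫ v : ℝ, f (x, v)) = Real.sqrt (2*π) * s * Real.exp (-(x^2/2)) := by
    intro x hx
    have hb : 0 < x^2/(2*s^2) := by positivity
    rw [hfeqx x, integral_const_mul,
      integral_sub_right_eq_self (fun u => Real.exp (-(x^2/(2*s^2)) * u^2)) ρ,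
      integral_gaussian]
    have hsq : π / (x^2/(2*s^2)) = (Real.sqrt (2*π) * s / x)^2 := by
      rw [div_pow, mul_pow, Real.sq_sqrt (by positivity : (0:ℝ) ≤ 2*π)]
      field_simp
    rw [hsq, Real.sqrt_sq (by positivity)]
    field_simp
  have hint : Integrable f ((volume.restrict (Ioi (0:ℝ))).prod (volume.restrict (Ioi (0:ℝ)))) := by
    rw [integrable_prod_iff hfc.aestronglyMeasurable]
    constructor
    · filter_upwards [ae_restrict_mem measurableSet_Ioi] with x hx
      exact (hsec x hx).integrableOn
    · apply Integrable.mono' (g := fun x => Real.sqrt (2*π) * s * Real.exp (-(1/2 : ℝ) * x^2))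
      · have hg : Integrable (fun x : ℝ => Real.exp (-(1/2 : ℝ) * x^2)) volume :=
          integrable_exp_neg_mul_sq (by norm_num)
        have := (hg.const_mul (Real.sqrt (2*π) * s)).integrableOn
          (s := Ioi (0:ℝ))
        exact this
      · exact hfc.norm.aestronglyMeasurable.integral_prod_right'
      · filter_upwards [ae_restrict_mem measurableSet_Ioi] with x hx
        have hnn : 0 ≤ ∫ v in Ioi (0:ℝ), ‖f (x, v)‖ :=
          integral_nonneg fun v => norm_nonneg _
        rw [Real.norm_eq_abs, abs_of_nonneg hnn]
        have hfn : ∀ v : ℝ, ‖f (x, v)‖ = f (x, v) := by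
          intro v
          exact norm_of_nonneg (mul_nonneg (le_of_lt hx) (Real.exp_nonneg _))
        calc ∫ v in Ioi (0:ℝ), ‖f (x, v)‖ ≤ ∫ v : ℝ, ‖f (x, v)‖ :=
              setIntegral_le_integral (hsec x hx).norm
                (Eventually.of_forall fun v => norm_nonneg _)
          _ = ∫ v : ℝ, f (x, v) := by simp only [hfn]
          _ = Real.sqrt (2*π) * s * Real.exp (-(x^2/2)) := hval x hx
          _ = Real.sqrt (2*π) * s * Real.exp (-(1/2 : ℝ) * x^2) := by rw [show -(x^2/2) = -(1/2 : ℝ)*x^2 by ring]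
  have key : (∫ x in Ioi (0:ℝ), ∫ y in Ioi (0:ℝ),
      Real.exp (-(x^2 - 2*ρ*x*y + y^2) / (2 * (1 - ρ^2))))
      = s * (π/2 + Real.arctan (ρ/s)) := by
    have step1 : ∀ x ∈ Ioi (0:ℝ),
        (∫ y in Ioi (0:ℝ), Real.exp (-(x^2 - 2*ρ*x*y + y^2) / (2 * (1 - ρ^2))))
        = ∫ v in Ioi (0:ℝ), f (x, v) := by
      intro x hx
      have hx' : (x:ℝ) ≠ 0 := ne_of_gt hx
      have hcv := integral_comp_mul_left_Ioi
        (fun y => Real.exp (-(x^2 - 2*ρ*x*y + y^2) / (2 * (1 - ρ^2)))) 0 hx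
      rw [mul_zero, smul_eq_mul] at hcv
      have h5 : (∫ y in Ioi (0:ℝ), Real.exp (-(x^2 - 2*ρ*x*y + y^2) / (2 * (1 - ρ^2))))
          = x * ∫ v in Ioi (0:ℝ),
              Real.exp (-(x^2 - 2*ρ*x*(x*v) + (x*v)^2) / (2 * (1 - ρ^2))) := by
        rw [hcv, ← mul_assoc, mul_inv_cancel₀ hx', one_mul]
      rw [h5, ← integral_const_mul]
      apply setIntegral_congr_fun measurableSet_Ioi
      intro v _
      simp only [hfdef]
      congr 1
      rw [hs2]
      have hne : (1:ℝ) - ρ^2 ≠ 0 := ne_of_gt hpos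
      field_simp
      ring
    rw [setIntegral_congr_fun measurableSet_Ioi step1, integral_integral_swap hint]
    have step3 : ∀ v ∈ Ioi (0:ℝ),
        (∫ x in Ioi (0:ℝ), f (x, v)) = s^2/((v-ρ)^2+s^2) := by
      intro v _
      have ha : 0 < ((v-ρ)^2+s^2)/(2*s^2) := by positivity
      have := aux_xint ha
      simp only [hfdef]
      rw [this]
      have hne : (v-ρ)^2+s^2 ≠ 0 := by positivity
      field_simp
    rw [setIntegral_congr_fun measurableSet_Ioi step3, aux_vint hs]
  simp_rw [integral_const_mul]
  rw [key]
  have hπ : π ≠ 0 := pi_ne_zero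
  field_simp
end

section
/- For every ρ ∈ (−1, 1), ∫₀^∞ ∫₀^∞ x y φ_ρ(x, y) dx dy = (1/(2π)) √(1 − ρ²) + ρ · ∫₀^∞ ∫₀^∞ φ_ρ(x, y) dx dy. Equivalently, if (X, Y) has the standard bivariate normal distribution with correlation ρ, then E(X₊ Y₊) = √(1 − ρ²)/(2π) + ρ · P(X > 0, Y > 0), where x₊ = max(x, 0). -/
open Real Set MeasureTheory
open Filter

noncomputable def Phi (s t : ℝ) : ℝ := ∫ u in Iic t, Real.exp (-u^2 / (2*s^2))

lemma gauss_integrable (s : ℝ) (hs : 0 < s) :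
    Integrable (fun u : ℝ => Real.exp (-u^2 / (2*s^2))) := by
  have hb : 0 < (2*s^2)⁻¹ := by positivity
  have h := integrable_exp_neg_mul_sq hb
  convert h using 2 with y
  rw [neg_div, div_eq_inv_mul, neg_mul]

lemma gauss_mul_integrable (s : ℝ) (hs : 0 < s) :
    Integrable (fun u : ℝ => u * Real.exp (-u^2 / (2*s^2))) := by
  have hb : 0 < (2*s^2)⁻¹ := by positivity
  have h := integrable_mul_exp_neg_mul_sq hb
  convert h using 2 with y
  rw [neg_div, div_eq_inv_mul, neg_mul]

lemma gauss_shift_integrable (s c : ℝ) (hs : 0 < s) :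
    Integrable (fun y : ℝ => Real.exp (-(y - c)^2 / (2*s^2))) :=
  (gauss_integrable s hs).comp_sub_right c

lemma gauss_mul_shift_integrable (s c : ℝ) (hs : 0 < s) :
    Integrable (fun y : ℝ => (y - c) * Real.exp (-(y - c)^2 / (2*s^2))) :=
  (gauss_mul_integrable s hs).comp_sub_right c

lemma sq_gauss_integrable (s : ℝ) (hs : 0 < s) :
    Integrable (fun u : ℝ => u^2 * Real.exp (-u^2 / (2*s^2))) := by
  have hb : 0 < (2*s^2)⁻¹ := by positivity
  have h := integrable_rpow_mul_exp_neg_mul_sq hb (show (-1:ℝ) < 2 by norm_num)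
  convert h using 2 with y
  rw [← Real.rpow_natCast y 2, neg_div, div_eq_inv_mul, neg_mul]
  norm_num

lemma gauss_deriv (s c : ℝ) (hs : 0 < s) (y : ℝ) :
    HasDerivAt (fun y : ℝ => -s^2 * Real.exp (-(y - c)^2 / (2*s^2)))
      ((y - c) * Real.exp (-(y - c)^2 / (2*s^2))) y := by
  have h1 : HasDerivAt (fun y : ℝ => -(y - c)^2 / (2*s^2)) (-(y - c) / s^2) y := by
    have : HasDerivAt (fun y : ℝ => (y - c)) 1 y := (hasDerivAt_id y).sub_const c
    have h2 := ((this.pow 2).neg).div_const (2*s^2)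
    refine h2.congr_deriv ?_
    push_cast
    field_simp
  have h3 := (h1.exp).const_mul (-s^2 : ℝ)
  refine h3.congr_deriv ?_
  field_simp

lemma gauss_tendsto (s c : ℝ) (hs : 0 < s) :
    Tendsto (fun y : ℝ => -s^2 * Real.exp (-(y - c)^2 / (2*s^2))) atTop (nhds 0) := by
  have h : Tendsto (fun y : ℝ => -(y - c)^2 / (2*s^2)) atTop atBot := by
    apply Tendsto.atBot_div_const (by positivity)
    apply tendsto_neg_atBot_iff.2
    exact (tendsto_pow_atTop (two_ne_zero)).comp (tendsto_atTop_add_const_right _ (-c) tendsto_id)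
      |>.congr (by intro x; simp [sub_eq_add_neg])
  have := Real.tendsto_exp_atBot.comp h
  simpa using this.const_mul (-s^2 : ℝ)

lemma gauss_int_shift (s c : ℝ) (hs : 0 < s) :
    ∫ y in Ioi (0:ℝ), (y - c) * Real.exp (-(y - c)^2 / (2*s^2))
      = s^2 * Real.exp (-c^2 / (2*s^2)) := by
  have := integral_Ioi_of_hasDerivAt_of_tendsto' (a := (0:ℝ))
    (f := fun y : ℝ => -s^2 * Real.exp (-(y - c)^2 / (2*s^2)))
    (fun x _ => gauss_deriv s c hs x)
    (gauss_mul_shift_integrable s c hs).integrableOn (gauss_tendsto s c hs)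
  rw [this]
  simp [zero_sub, neg_sq]

lemma gauss_int_x (s : ℝ) (hs : 0 < s) :
    ∫ y in Ioi (0:ℝ), y * Real.exp (-y^2 / (2*s^2)) = s^2 := by
  have := gauss_int_shift s 0 hs
  simpa using this

lemma shift_Ioi (f : ℝ → ℝ) (t : ℝ) :
    ∫ y in Ioi (0:ℝ), f (y - t) = ∫ u in Ioi (-t), f u := by
  have h := (MeasurableEquiv.subRight t).measurableEmbedding.setIntegral_map
    (μ := (volume : Measure ℝ)) f (Ioi (-t))
  have hmap : (volume : Measure ℝ).map (MeasurableEquiv.subRight t) = volume := by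
    exact (measurePreserving_sub_right (volume : Measure ℝ) t).map_eq
  rw [hmap] at h
  rw [h]
  have hpre : (MeasurableEquiv.subRight t) ⁻¹' Ioi (-t) = Ioi (0:ℝ) := by
    ext y
    simp only [MeasurableEquiv.subRight, MeasurableEquiv.coe_mk, Equiv.coe_fn_mk, mem_preimage,
      mem_Ioi, Equiv.subRight_apply]
    change -t < y - t ↔ 0 < y
    constructor <;> intro h <;> linarith
  rw [hpre]
  rfl

lemma gauss_int_cdf (s t : ℝ) :
    ∫ y in Ioi (0:ℝ), Real.exp (-(y - t)^2 / (2*s^2)) = Phi s t := by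
  rw [shift_Ioi (fun u => Real.exp (-u^2 / (2*s^2))) t]
  have := integral_comp_neg_Ioi (-t) (fun u => Real.exp (-u^2 / (2*s^2)))
  simp only [neg_sq, neg_neg] at this
  rw [Phi, ← this]

lemma Phi_hasDerivAt (s : ℝ) (hs : 0 < s) (t : ℝ) :
    HasDerivAt (Phi s) (Real.exp (-t^2 / (2*s^2))) t := by
  have hint := gauss_integrable s hs
  have heq : Phi s = fun t => (∫ u in (0:ℝ)..t, Real.exp (-u^2 / (2*s^2))) + Phi s 0 := by
    funext t
    have := intervalIntegral.integral_Iic_sub_Iic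
      (hint.integrableOn (s := Iic (0:ℝ))) (hint.integrableOn (s := Iic t))
    simp only [Phi]
    linarith [this]
  rw [heq]
  have hd : HasDerivAt (fun t => ∫ u in (0:ℝ)..t, Real.exp (-u^2 / (2*s^2)))
      (Real.exp (-t^2 / (2*s^2))) t := by
    apply intervalIntegral.integral_hasDerivAt_right hint.intervalIntegrable
      hint.aestronglyMeasurable.stronglyMeasurableAtFilter
    exact (Real.continuous_exp.comp (by continuity)).continuousAt
  simpa using hd.add_const (Phi s 0)

lemma Phi_nonneg (s t : ℝ) : 0 ≤ Phi s t :=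
  integral_nonneg fun _ => (Real.exp_pos _).le

lemma Phi_le (s : ℝ) (hs : 0 < s) (t : ℝ) :
    Phi s t ≤ ∫ u : ℝ, Real.exp (-u^2 / (2*s^2)) :=
  setIntegral_le_integral (gauss_integrable s hs)
    (Filter.Eventually.of_forall fun _ => (Real.exp_pos _).le)

lemma Phi_continuous (s : ℝ) (hs : 0 < s) : Continuous (Phi s) :=
  continuous_iff_continuousAt.2 fun t => (Phi_hasDerivAt s hs t).continuousAt

theorem bivariate_normal_positive_part_moment
    (ρ : ℝ) (hρ : ρ ∈ Set.Ioo (-1 : ℝ) 1) :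
    ∫ x in Set.Ioi (0:ℝ), ∫ y in Set.Ioi (0:ℝ),
      x * y * ((1 / (2 * π * Real.sqrt (1 - ρ^2))) *
        Real.exp (-(x^2 - 2*ρ*x*y + y^2) / (2 * (1 - ρ^2))))
    = (1 / (2 * π)) * Real.sqrt (1 - ρ^2)
      + ρ * ∫ x in Set.Ioi (0:ℝ), ∫ y in Set.Ioi (0:ℝ),
          (1 / (2 * π * Real.sqrt (1 - ρ^2))) *
            Real.exp (-(x^2 - 2*ρ*x*y + y^2) / (2 * (1 - ρ^2))) := by
  obtain ⟨hρ1, hρ2⟩ := hρ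
  have h1ρ : 0 < 1 - ρ^2 := by nlinarith
  set s : ℝ := Real.sqrt (1 - ρ^2) with hs_def
  have hs : 0 < s := Real.sqrt_pos.2 h1ρ
  have hs2 : s^2 = 1 - ρ^2 := Real.sq_sqrt h1ρ.le
  have hπ : (0:ℝ) < π := Real.pi_pos
  set K : ℝ := 1 / (2 * π * s) with hK_def
  -- exponent rewrites
  have hE : ∀ x y : ℝ, Real.exp (-(x^2 - 2*ρ*x*y + y^2) / (2 * (1 - ρ^2)))
      = Real.exp (-x^2/2) * Real.exp (-(y - ρ*x)^2 / (2*s^2)) := by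
    intro x y
    rw [← Real.exp_add]
    congr 1
    rw [hs2]
    field_simp
    ring
  have hM : ∀ x : ℝ, Real.exp (-x^2/2) * Real.exp (-(ρ*x)^2/(2*s^2))
      = Real.exp (-x^2/(2*s^2)) := by
    intro x
    rw [← Real.exp_add]
    congr 1
    rw [hs2]
    field_simp
    ring
  -- inner integral, RHS version
  have stepA : ∀ x : ℝ, (∫ y in Ioi (0:ℝ),
      K * Real.exp (-(x^2 - 2*ρ*x*y + y^2) / (2 * (1 - ρ^2))))
      = K * (Real.exp (-x^2/2) * Phi s (ρ*x)) := by
    intro x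
    simp_rw [hE x]
    rw [show ∀ _:Unit, (fun y => K * (Real.exp (-x^2/2) * Real.exp (-(y - ρ*x)^2 / (2*s^2))))
        = fun y => (K * Real.exp (-x^2/2)) * Real.exp (-(y - ρ*x)^2 / (2*s^2)) from
        fun _ => funext fun y => by ring, integral_const_mul, gauss_int_cdf, mul_assoc]
    exact ()
  -- inner integral, LHS version
  have stepB : ∀ x : ℝ, (∫ y in Ioi (0:ℝ),
      x * y * (K * Real.exp (-(x^2 - 2*ρ*x*y + y^2) / (2 * (1 - ρ^2)))))
      = K * (s^2 * (x * Real.exp (-x^2/(2*s^2)))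
          + ρ * (x^2 * Real.exp (-x^2/2) * Phi s (ρ*x))) := by
    intro x
    have e1 : (fun y : ℝ => x * y * (K * Real.exp (-(x^2 - 2*ρ*x*y + y^2) / (2 * (1 - ρ^2)))))
        = fun y => (x * K * Real.exp (-x^2/2)) *
            (((y - ρ*x) * Real.exp (-(y - ρ*x)^2/(2*s^2)))
              + (ρ*x) * Real.exp (-(y - ρ*x)^2/(2*s^2))) := by
      funext y
      rw [hE x y]
      ring
    rw [e1, integral_const_mul,
      integral_add (gauss_mul_shift_integrable s (ρ*x) hs).integrableOn
        ((gauss_shift_integrable s (ρ*x) hs).integrableOn.const_mul _),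
      integral_const_mul, gauss_int_shift s (ρ*x) hs, gauss_int_cdf]
    linear_combination (K * s^2 * x) * hM x
  -- bounds and integrability for Phi ∘ (ρ * ·)
  have hΦm : AEStronglyMeasurable (fun x : ℝ => Phi s (ρ*x)) (volume.restrict (Ioi 0)) :=
    ((Phi_continuous s hs).comp (continuous_const.mul continuous_id)).aestronglyMeasurable
  have hΦb : ∃ C, ∀ x : ℝ, ‖Phi s (ρ*x)‖ ≤ C := by
    refine ⟨∫ u : ℝ, Real.exp (-u^2/(2*s^2)), fun x => ?_⟩
    rw [Real.norm_eq_abs, abs_of_nonneg (Phi_nonneg s _)]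
    exact Phi_le s hs _
  have hg1 : Integrable (fun x : ℝ => x^2 * Real.exp (-x^2/2)) := by
    have := sq_gauss_integrable 1 one_pos
    simpa using this
  have hg0 : Integrable (fun x : ℝ => Real.exp (-x^2/2)) := by
    have := gauss_integrable 1 one_pos
    simpa using this
  have intB0 : IntegrableOn (fun x : ℝ => x^2 * Real.exp (-x^2/2) * Phi s (ρ*x)) (Ioi 0) := by
    have := hg1.integrableOn.bdd_mul hΦm (ae_of_all _ hΦb.choose_spec)
    exact this.congr (Filter.Eventually.of_forall fun x => by ring)
  have intB1 : IntegrableOn (fun x : ℝ => Real.exp (-x^2/2) * Phi s (ρ*x)) (Ioi 0) := by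
    have := hg0.integrableOn.bdd_mul hΦm (ae_of_all _ hΦb.choose_spec)
    exact this.congr (Filter.Eventually.of_forall fun x => by ring)
  have intA : IntegrableOn (fun x : ℝ => s^2 * (x * Real.exp (-x^2/(2*s^2)))) (Ioi 0) :=
    (gauss_mul_integrable s hs).integrableOn.const_mul _
  -- evaluate the LHS double integral
  have hL : (∫ x in Ioi (0:ℝ), ∫ y in Ioi (0:ℝ),
      x * y * (K * Real.exp (-(x^2 - 2*ρ*x*y + y^2) / (2 * (1 - ρ^2)))))
      = K * s^2 * s^2
        + K * ρ * (∫ x in Ioi (0:ℝ), x^2 * Real.exp (-x^2/2) * Phi s (ρ*x)) := by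
    rw [setIntegral_congr_fun measurableSet_Ioi (fun x _ => stepB x), integral_const_mul,
      integral_add intA (intB0.const_mul ρ), integral_const_mul, integral_const_mul,
      gauss_int_x s hs]
    ring
  -- evaluate the RHS double integral
  have hR : (∫ x in Ioi (0:ℝ), ∫ y in Ioi (0:ℝ),
      K * Real.exp (-(x^2 - 2*ρ*x*y + y^2) / (2 * (1 - ρ^2))))
      = K * (∫ x in Ioi (0:ℝ), Real.exp (-x^2/2) * Phi s (ρ*x)) := by
    rw [setIntegral_congr_fun measurableSet_Ioi (fun x _ => stepA x), integral_const_mul]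
  -- integration by parts in x
  have hderiv : ∀ x : ℝ, HasDerivAt (fun x : ℝ => -x * Real.exp (-x^2/2) * Phi s (ρ*x))
      ((x^2-1) * Real.exp (-x^2/2) * Phi s (ρ*x) - ρ * (x * Real.exp (-x^2/(2*s^2)))) x := by
    intro x
    have d0 : HasDerivAt (fun x : ℝ => -x^2/2) (-x) x := by
      have := ((hasDerivAt_pow 2 x).neg).div_const 2
      refine this.congr_deriv ?_
      push_cast
      ring
    have dB : HasDerivAt (fun x : ℝ => Real.exp (-x^2/2)) (Real.exp (-x^2/2) * (-x)) x := d0.exp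
    have d1 : HasDerivAt (fun x : ℝ => -x * Real.exp (-x^2/2)) ((x^2-1) * Real.exp (-x^2/2)) x := by
      have := ((hasDerivAt_id x).neg).mul dB
      refine this.congr_deriv ?_
      simp only [Pi.neg_apply, id_eq]
      ring
    have dρ : HasDerivAt (fun x : ℝ => ρ * x) ρ x := by
      simpa using (hasDerivAt_id x).const_mul ρ
    have d2 : HasDerivAt (fun x : ℝ => Phi s (ρ*x)) (Real.exp (-(ρ*x)^2/(2*s^2)) * ρ) x :=
      (Phi_hasDerivAt s hs (ρ*x)).comp x dρ
    have := d1.mul d2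
    refine this.congr_deriv ?_
    linear_combination (-(ρ * x)) * hM x
  have hIntD : IntegrableOn (fun x : ℝ =>
      (x^2-1) * Real.exp (-x^2/2) * Phi s (ρ*x) - ρ * (x * Real.exp (-x^2/(2*s^2)))) (Ioi 0) := by
    have h := (intB0.sub intB1).sub ((gauss_mul_integrable s hs).integrableOn.const_mul ρ)
    exact h.congr (Filter.Eventually.of_forall fun x => by simp only [Pi.sub_apply]; ring)
  have htend : Tendsto (fun x : ℝ => -x * Real.exp (-x^2/2) * Phi s (ρ*x)) atTop (nhds 0) := by
    obtain ⟨C, hC⟩ := hΦb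
    have base : Tendsto (fun x : ℝ => |x| ^ (1:ℝ) * Real.exp (-(1/2:ℝ) * x^2)) atTop (nhds 0) := by
      have := tendsto_rpow_abs_mul_exp_neg_mul_sq_cocompact (show (0:ℝ) < 1/2 by norm_num) 1
      exact this.mono_left (by rw [cocompact_eq_atBot_atTop]; exact le_sup_right)
    have base' : Tendsto (fun x : ℝ => |x| ^ (1:ℝ) * Real.exp (-(1/2:ℝ) * x^2) * C) atTop (nhds 0) := by
      simpa using base.mul_const C
    refine squeeze_zero_norm' ?_ base'
    filter_upwards [eventually_ge_atTop (0:ℝ)] with x hx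
    have hCx := hC x
    rw [Real.norm_eq_abs] at hCx ⊢
    have h1 : |(-x) * Real.exp (-x^2/2) * Phi s (ρ*x)| = |x| * Real.exp (-x^2/2) * |Phi s (ρ*x)| := by
      rw [abs_mul, abs_mul, abs_neg, abs_of_nonneg (Real.exp_pos _).le]
    rw [h1, Real.rpow_one]
    have h2 : Real.exp (-(1/2:ℝ) * x^2) = Real.exp (-x^2/2) := by ring_nf
    rw [h2]
    exact mul_le_mul_of_nonneg_left hCx (by positivity)
  have hD : ∫ x in Ioi (0:ℝ),
      ((x^2-1) * Real.exp (-x^2/2) * Phi s (ρ*x) - ρ * (x * Real.exp (-x^2/(2*s^2)))) = 0 := by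
    have := integral_Ioi_of_hasDerivAt_of_tendsto' (a := (0:ℝ))
      (fun x _ => hderiv x) hIntD htend
    rw [this]
    norm_num
  have i01 : IntegrableOn (fun x : ℝ => x^2 * Real.exp (-x^2/2) * Phi s (ρ*x)
      - Real.exp (-x^2/2) * Phi s (ρ*x)) (Ioi 0) := intB0.sub intB1
  have hkey : (∫ x in Ioi (0:ℝ), x^2 * Real.exp (-x^2/2) * Phi s (ρ*x))
      = (∫ x in Ioi (0:ℝ), Real.exp (-x^2/2) * Phi s (ρ*x)) + ρ * s^2 := by
    have hsplit : ∫ x in Ioi (0:ℝ),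
        ((x^2-1) * Real.exp (-x^2/2) * Phi s (ρ*x) - ρ * (x * Real.exp (-x^2/(2*s^2))))
        = (∫ x in Ioi (0:ℝ), x^2 * Real.exp (-x^2/2) * Phi s (ρ*x))
          - (∫ x in Ioi (0:ℝ), Real.exp (-x^2/2) * Phi s (ρ*x))
          - ρ * (∫ x in Ioi (0:ℝ), x * Real.exp (-x^2/(2*s^2))) := by
      rw [setIntegral_congr_fun measurableSet_Ioi
        (show EqOn (fun x : ℝ =>
          (x^2-1) * Real.exp (-x^2/2) * Phi s (ρ*x) - ρ * (x * Real.exp (-x^2/(2*s^2))))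
          (fun x : ℝ => (x^2 * Real.exp (-x^2/2) * Phi s (ρ*x) - Real.exp (-x^2/2) * Phi s (ρ*x))
            - ρ * (x * Real.exp (-x^2/(2*s^2)))) (Ioi 0) from fun x _ => by ring),
        integral_sub i01 ((gauss_mul_integrable s hs).integrableOn.const_mul ρ),
        integral_sub intB0 intB1, integral_const_mul]
    rw [hsplit, gauss_int_x s hs] at hD
    linarith
  rw [hL, hR, hkey]
  have hsum : s^2 + ρ^2 = 1 := by rw [hs2]; ring
  have hKs : K * s^2 = 1/(2*π) * s := by
    rw [hK_def]
    field_simp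
  linear_combination (K * s^2) * hsum + hKs
end

section
/- For every ρ ∈ (−1, 0), the quadrant probability of the standard bivariate normal distribution with correlation ρ satisfies ∫₀^∞ ∫₀^∞ φ_ρ(x, y) dx dy = −(1/(2π)) · arctan(√(1 − ρ²) / ρ). -/
open Real Set MeasureTheory Filter Topology

private lemma aux_int_x {b : ℝ} (hb : 0 < b) :
    ∫ x in Set.Ioi (0:ℝ), x * Real.exp (-b * x^2) = (2*b)⁻¹ := by
  have h : ∀ x ∈ Ici (0:ℝ), HasDerivAt (fun x => -(2*b)⁻¹ * Real.exp (-b * x^2))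
      (x * Real.exp (-b * x^2)) x := by
    intro x _
    have h1 : HasDerivAt (fun x : ℝ => -b * x^2) (-b * (2*x)) x := by
      simpa using (hasDerivAt_pow 2 x).const_mul (-b)
    have h2 := (h1.exp).const_mul (-(2*b)⁻¹)
    refine h2.congr_deriv ?_
    field_simp
  have hint : IntegrableOn (fun x : ℝ => x * Real.exp (-b * x^2)) (Ioi 0) :=
    (integrable_mul_exp_neg_mul_sq hb).integrableOn
  have htend : Tendsto (fun x : ℝ => -(2*b)⁻¹ * Real.exp (-b * x^2)) atTop (𝓝 0) := by
    have h1 : Tendsto (fun x : ℝ => -b * x^2) atTop atBot := by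
      have : Tendsto (fun x : ℝ => b * x^2) atTop atTop :=
        (tendsto_pow_atTop (two_ne_zero)).const_mul_atTop hb
      exact tendsto_neg_atBot_iff.mpr this |>.congr (fun x => by ring)
    have h2 : Tendsto (fun x : ℝ => Real.exp (-b * x^2)) atTop (𝓝 0) :=
      Real.tendsto_exp_atBot.comp h1
    simpa using h2.const_mul (-(2*b)⁻¹)
  rw [integral_Ioi_of_hasDerivAt_of_tendsto' h hint htend]
  simp

private lemma aux_integrable_arctan {c s : ℝ} (hs : 0 < s) :
    Integrable (fun v : ℝ => ((v - c)^2 + s^2)⁻¹) := by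
  have h1 : Integrable (fun w : ℝ => (1 + (w/s)^2)⁻¹) :=
    integrable_inv_one_add_sq.comp_div hs.ne'
  have h2 : Integrable (fun v : ℝ => (1 + ((v - c)/s)^2)⁻¹) := by
    have := h1.comp_sub_right c
    simpa using this
  have h3 := h2.const_mul (s^2)⁻¹
  refine h3.congr (Eventually.of_forall fun v => ?_)
  have hs2 : s^2 ≠ 0 := by positivity
  field_simp
  ring

private lemma aux_int_arctan {c s : ℝ} (hs : 0 < s) :
    ∫ v in Set.Ioi (0:ℝ), ((v - c)^2 + s^2)⁻¹
      = (π/2 - Real.arctan (-c/s))/s := by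
  have h : ∀ v ∈ Ici (0:ℝ), HasDerivAt (fun v => s⁻¹ * Real.arctan ((v - c)/s))
      (((v - c)^2 + s^2)⁻¹) v := by
    intro v _
    have h1 : HasDerivAt (fun v : ℝ => (v - c)/s) (1/s) v := by
      simpa using ((hasDerivAt_id v).sub_const c).div_const s
    have h2 := ((Real.hasDerivAt_arctan ((v - c)/s)).comp v h1).const_mul s⁻¹
    refine h2.congr_deriv ?_
    have hpos : (0:ℝ) < (v - c)^2 + s^2 := by positivity
    have h1s : (1:ℝ) + ((v-c)/s)^2 > 0 := by positivity
    field_simp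
    ring
  have hint : IntegrableOn (fun v : ℝ => ((v - c)^2 + s^2)⁻¹) (Ioi 0) :=
    (aux_integrable_arctan hs).integrableOn
  have htend : Tendsto (fun v : ℝ => s⁻¹ * Real.arctan ((v - c)/s)) atTop
      (𝓝 (s⁻¹ * (π/2))) := by
    have h1 : Tendsto (fun v : ℝ => (v - c)/s) atTop atTop := by
      apply Tendsto.atTop_div_const hs
      exact tendsto_atTop_add_const_right atTop (-c) tendsto_id
    have h2 : Tendsto (fun v : ℝ => Real.arctan ((v - c)/s)) atTop (𝓝 (π/2)) :=
      (tendsto_nhds_of_tendsto_nhdsWithin Real.tendsto_arctan_atTop).comp h1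
    exact h2.const_mul s⁻¹
  rw [integral_Ioi_of_hasDerivAt_of_tendsto' h hint htend]
  rw [zero_sub]
  field_simp

theorem bivariate_normal_quadrant_probability_neg
    (ρ : ℝ) (hρ : ρ ∈ Set.Ioo (-1 : ℝ) 0) :
    ∫ x in Set.Ioi (0:ℝ), ∫ y in Set.Ioi (0:ℝ),
      (1 / (2 * π * Real.sqrt (1 - ρ^2))) *
        Real.exp (-(x^2 - 2*ρ*x*y + y^2) / (2 * (1 - ρ^2)))
    = -(1 / (2 * π)) * Real.arctan (Real.sqrt (1 - ρ^2) / ρ) := by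
  obtain ⟨hρ1, hρ2⟩ := hρ
  set s := Real.sqrt (1 - ρ^2) with hs_def
  have h1 : (0:ℝ) < 1 - ρ^2 := by nlinarith
  have hs : 0 < s := Real.sqrt_pos.mpr h1
  have hs2 : s^2 = 1 - ρ^2 := Real.sq_sqrt h1.le
  set C := 1 / (2 * π * s) with hC_def
  -- the quadratic in v
  set b : ℝ → ℝ := fun v => ((v - ρ)^2 + s^2) / (2 * (1 - ρ^2)) with hb_def
  have hbpos : ∀ v : ℝ, 0 < b v := by
    intro v
    have : (0:ℝ) < (v - ρ)^2 + s^2 := by positivity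
    exact div_pos this (by linarith)
  -- Step 1: substitute y = x * v in the inner integral
  have key : ∀ x ∈ Ioi (0:ℝ),
      (∫ y in Set.Ioi (0:ℝ), C * Real.exp (-(x^2 - 2*ρ*x*y + y^2) / (2 * (1 - ρ^2))))
      = ∫ v in Set.Ioi (0:ℝ), C * (x * Real.exp (-(b v) * x^2)) := by
    intro x hx
    rw [integral_const_mul, integral_const_mul]
    congr 1
    have h := integral_comp_mul_left_Ioi
      (fun y => Real.exp (-(x^2 - 2*ρ*x*y + y^2) / (2 * (1 - ρ^2)))) 0 hx
    rw [mul_zero] at h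
    have heq : (∫ y in Set.Ioi (0:ℝ), Real.exp (-(x^2 - 2*ρ*x*y + y^2) / (2 * (1 - ρ^2))))
        = x * ∫ v in Set.Ioi (0:ℝ),
            Real.exp (-(x^2 - 2*ρ*x*(x*v) + (x*v)^2) / (2 * (1 - ρ^2))) := by
      rw [h, smul_eq_mul, ← mul_assoc, mul_inv_cancel₀ (ne_of_gt hx), one_mul]
    rw [heq, ← integral_const_mul]
    refine setIntegral_congr_fun measurableSet_Ioi fun v _ => ?_
    simp only [hb_def]
    congr 1
    rw [Real.exp_eq_exp]
    linear_combination (x^2 / (2 * (1 - ρ^2))) * hs2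
  rw [setIntegral_congr_fun measurableSet_Ioi key]
  -- pull out the constant C
  have hpull : ∀ x ∈ Ioi (0:ℝ),
      (∫ v in Set.Ioi (0:ℝ), C * (x * Real.exp (-(b v) * x^2)))
      = C * ∫ v in Set.Ioi (0:ℝ), x * Real.exp (-(b v) * x^2) :=
    fun x _ => integral_const_mul C _
  rw [setIntegral_congr_fun measurableSet_Ioi hpull, integral_const_mul]
  -- Step 2: swap the order of integration
  have hmeas : AEStronglyMeasurable (Function.uncurry fun x v => x * Real.exp (-(b v) * x^2))
      ((volume.restrict (Ioi (0:ℝ))).prod (volume.restrict (Ioi (0:ℝ)))) := by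
    apply Continuous.aestronglyMeasurable
    apply Continuous.mul continuous_fst
    apply Real.continuous_exp.comp
    apply Continuous.mul
    · apply Continuous.neg
      apply Continuous.div_const
      exact ((continuous_snd.sub continuous_const).pow 2).add continuous_const
    · exact continuous_fst.pow 2
  have hintb : Integrable (fun v : ℝ => (2 * b v)⁻¹) (volume.restrict (Ioi (0:ℝ))) := by
    have h2 : Integrable (fun v : ℝ => ((v - ρ)^2 + s^2)⁻¹) :=
      aux_integrable_arctan hs
    have h3 := (h2.const_mul (1 - ρ^2)).integrableOn (s := Ioi (0:ℝ))
    refine h3.congr_fun (fun v _ => ?_) measurableSet_Ioi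
    rw [hb_def]
    have hq : (0:ℝ) < (v - ρ)^2 + s^2 := by positivity
    field_simp
  have hswap : Integrable (Function.uncurry fun x v => x * Real.exp (-(b v) * x^2))
      ((volume.restrict (Ioi (0:ℝ))).prod (volume.restrict (Ioi (0:ℝ)))) := by
    rw [integrable_prod_iff' hmeas]
    constructor
    · refine Eventually.of_forall fun v => ?_
      exact (integrable_mul_exp_neg_mul_sq (hbpos v)).integrableOn
    · refine hintb.congr (Filter.eventuallyEq_of_mem
        (self_mem_ae_restrict measurableSet_Ioi) fun v _ => ?_)
      simp only [Function.uncurry_apply_pair]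
      have : (∫ x in Set.Ioi (0:ℝ), ‖x * Real.exp (-(b v) * x^2)‖)
          = ∫ x in Set.Ioi (0:ℝ), x * Real.exp (-(b v) * x^2) := by
        refine setIntegral_congr_fun measurableSet_Ioi fun x hx => ?_
        rw [Real.norm_eq_abs, abs_mul, abs_of_pos hx, abs_of_pos (Real.exp_pos _)]
      rw [this, aux_int_x (hbpos v)]
  rw [integral_integral_swap hswap]
  -- Step 3: compute the inner (x) integral
  have key2 : ∀ v ∈ Ioi (0:ℝ),
      (∫ x in Set.Ioi (0:ℝ), x * Real.exp (-(b v) * x^2)) = (2 * b v)⁻¹ :=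
    fun v _ => aux_int_x (hbpos v)
  rw [setIntegral_congr_fun measurableSet_Ioi key2]
  -- Step 4: compute the v integral
  have key3 : ∀ v ∈ Ioi (0:ℝ),
      (2 * b v)⁻¹ = (1 - ρ^2) * ((v - ρ)^2 + s^2)⁻¹ := by
    intro v _
    rw [hb_def]
    have hq : (0:ℝ) < (v - ρ)^2 + s^2 := by positivity
    field_simp
  rw [setIntegral_congr_fun measurableSet_Ioi key3, integral_const_mul,
    aux_int_arctan (c := ρ) hs]
  -- Step 5: final algebra
  have harctan : Real.arctan (s / ρ) = -(π/2) - Real.arctan (ρ / s) := by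
    have hneg : ρ / s < 0 := div_neg_of_neg_of_pos hρ2 hs
    have := Real.arctan_inv_of_neg hneg
    rwa [inv_div] at this
  rw [harctan]
  have harctan2 : Real.arctan (-ρ/s) = - Real.arctan (ρ/s) := by
    rw [neg_div, Real.arctan_neg]
  rw [harctan2, hC_def]
  have hss : (1:ℝ) - ρ^2 = s * s := by nlinarith [hs2]
  rw [hss]
  have hsne : s ≠ 0 := ne_of_gt hs
  have hpne : π ≠ 0 := Real.pi_ne_zero
  field_simp
  ring
end

section
/- Let a, b > 0. Then ∫_ℝ ∫_ℝ max(z, 0) · max(w/a − z/b, 0) · φ(z) φ(w) dz dw = (1/(2bπ)) · (b/a − arctan(b/a)). Equivalently, if Z and W are independent standard normal random variables, then E[Z₊ (W/a − Z/b)₊] = (1/(2bπ))(b/a − arctan(b/a)), where x₊ = max(x, 0). -/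
open Real Set MeasureTheory

lemma gauss_Ioi (β : ℝ) (hβ : 0 < β) :
    ∫ x in Ioi (0:ℝ), x * Real.exp (-β * x ^ 2) = (2*β)⁻¹ := by
  have hd : ∀ x ∈ Ioi (0:ℝ), HasDerivAt (fun x => -(2*β)⁻¹ * Real.exp (-β * x^2))
      (x * Real.exp (-β * x^2)) x := by
    intro x _
    have h1 : HasDerivAt (fun x : ℝ => -β * x^2) (-β * (2*x)) x := by
      simpa using ((hasDerivAt_pow 2 x).const_mul (-β))
    have := (h1.exp).const_mul (-(2*β)⁻¹)
    refine this.congr_deriv ?_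
    field_simp
  have htend : Filter.Tendsto (fun x => -(2*β)⁻¹ * Real.exp (-β * x^2)) Filter.atTop (nhds 0) := by
    have : Filter.Tendsto (fun x : ℝ => -β * x^2) Filter.atTop Filter.atBot := by
      apply Filter.Tendsto.const_mul_atTop_of_neg (by linarith)
      exact Filter.tendsto_pow_atTop (by norm_num)
    simpa using (Real.tendsto_exp_atBot.comp this).const_mul (-(2*β)⁻¹)
  have := integral_Ioi_of_hasDerivAt_of_tendsto
    (by fun_prop : Continuous fun x => -(2*β)⁻¹ * Real.exp (-β * x^2)).continuousWithinAt
    hd (integrable_mul_exp_neg_mul_sq hβ).integrableOn htend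
  rw [this]; simp

lemma L1 (m : ℝ) : ∫ z in (0:ℝ)..m, z * Real.exp (-z^2/2) = 1 - Real.exp (-m^2/2) := by
  have hd : ∀ z ∈ uIcc (0:ℝ) m, HasDerivAt (fun z => -Real.exp (-z^2/2))
      (z * Real.exp (-z^2/2)) z := by
    intro z _
    have h1 : HasDerivAt (fun z : ℝ => -z^2/2) (-z) z := by
      have := (hasDerivAt_pow 2 z).neg.div_const 2
      refine this.congr_deriv ?_; push_cast; ring
    have := h1.exp.neg
    refine this.congr_deriv ?_; ring
  have := intervalIntegral.integral_eq_sub_of_hasDerivAt hd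
    ((by fun_prop : Continuous fun z : ℝ => z * Real.exp (-z^2/2)).intervalIntegrable 0 m)
  rw [this]; simp [Real.exp_zero]; ring

lemma L2 (m : ℝ) : ∫ z in (0:ℝ)..m, (z^2-1) * Real.exp (-z^2/2) = -m * Real.exp (-m^2/2) := by
  have hd : ∀ z ∈ uIcc (0:ℝ) m, HasDerivAt (fun z => -z * Real.exp (-z^2/2))
      ((z^2-1) * Real.exp (-z^2/2)) z := by
    intro z _
    have h1 : HasDerivAt (fun z : ℝ => -z^2/2) (-z) z := by
      have := (hasDerivAt_pow 2 z).neg.div_const 2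
      refine this.congr_deriv ?_; push_cast; ring
    have := (hasDerivAt_id z).neg.mul h1.exp
    refine this.congr_deriv ?_; simp [id]; ring
  have := intervalIntegral.integral_eq_sub_of_hasDerivAt hd
    ((by fun_prop : Continuous fun z : ℝ => (z^2-1) * Real.exp (-z^2/2)).intervalIntegrable 0 m)
  rw [this]; norm_num

lemma inner_val (m : ℝ) :
    ∫ z in (0:ℝ)..m, (m*z - z^2) * Real.exp (-z^2/2)
      = m - ∫ t in (0:ℝ)..m, Real.exp (-t^2/2) := by
  have key : ∀ z : ℝ, (m*z - z^2) * Real.exp (-z^2/2)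
      = m * (z * Real.exp (-z^2/2)) - ((z^2-1) * Real.exp (-z^2/2) + Real.exp (-z^2/2)) := by
    intro z; ring
  simp_rw [key]
  rw [intervalIntegral.integral_sub, intervalIntegral.integral_add,
    intervalIntegral.integral_const_mul, L1, L2]
  · ring
  all_goals exact (by fun_prop : Continuous _).intervalIntegrable 0 m

lemma inner_eval (a b : ℝ) (ha : 0 < a) (hb : 0 < b) (w : ℝ) :
    (∫ z : ℝ, max z 0 * max (w / a - z / b) 0 * (Real.exp (-z^2 / 2) / Real.sqrt (2 * π)))
    = (max (b/a*w) 0 - ∫ t in (0:ℝ)..(max (b/a*w) 0), Real.exp (-t^2/2))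
        / (b * Real.sqrt (2*π)) := by
  rcases le_or_gt w 0 with hw | hw
  · have hmax0 : max (b/a*w) 0 = 0 :=
      max_eq_right (mul_nonpos_of_nonneg_of_nonpos (by positivity) hw)
    have h0 : ∀ z : ℝ,
        max z 0 * max (w / a - z / b) 0 * (Real.exp (-z^2 / 2) / Real.sqrt (2 * π)) = 0 := by
      intro z
      rcases le_or_gt z 0 with hz | hz
      · rw [max_eq_right hz, zero_mul, zero_mul]
      · have hneg : w / a - z / b < 0 := by
          have h1 : w / a ≤ 0 := div_nonpos_of_nonpos_of_nonneg hw ha.le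
          have h2 : 0 < z / b := div_pos hz hb
          linarith
        rw [max_eq_right hneg.le, mul_zero, zero_mul]
    simp only [h0, integral_zero, hmax0, intervalIntegral.integral_same, sub_zero, zero_div]
  · set m : ℝ := b/a*w with hm_def
    have hm : 0 < m := by positivity
    have hmax : max (b/a*w) 0 = m := max_eq_left hm.le
    have hma : w / a = m / b := by rw [hm_def]; field_simp
    have hsupp : Function.support (fun z : ℝ =>
        max z 0 * max (w / a - z / b) 0 * (Real.exp (-z^2 / 2) / Real.sqrt (2 * π)))
        ⊆ Ioc 0 m := by
      intro z hz
      simp only [Function.mem_support] at hz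
      by_contra hzc
      apply hz
      rw [mem_Ioc, not_and_or, not_lt, not_le] at hzc
      rcases hzc with h | h
      · rw [max_eq_right h, zero_mul, zero_mul]
      · have hneg : w / a - z / b < 0 := by
          rw [hma, sub_neg]
          gcongr
        rw [max_eq_right hneg.le, mul_zero, zero_mul]
    rw [← intervalIntegral.integral_eq_integral_of_support_subset hsupp, hmax]
    have heq : EqOn (fun z : ℝ =>
        max z 0 * max (w / a - z / b) 0 * (Real.exp (-z^2 / 2) / Real.sqrt (2 * π)))
        (fun z : ℝ => ((m*z - z^2) * Real.exp (-z^2/2)) / (b * Real.sqrt (2*π)))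
        (uIcc 0 m) := by
      intro z hz
      rw [uIcc_of_le hm.le, mem_Icc] at hz
      obtain ⟨hz0, hzm⟩ := hz
      have h2 : 0 ≤ w / a - z / b := by rw [hma, sub_nonneg]; gcongr
      show max z 0 * max (w / a - z / b) 0 * (Real.exp (-z^2 / 2) / Real.sqrt (2 * π)) = _
      rw [max_eq_left hz0, max_eq_left h2, hma]
      have hs : Real.sqrt (2*π) ≠ 0 := by positivity
      field_simp
    rw [intervalIntegral.integral_congr heq, intervalIntegral.integral_div, inner_val]

theorem expectation_posPart_gaussian
    (a b : ℝ) (ha : 0 < a) (hb : 0 < b) :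
    ∫ w : ℝ, ∫ z : ℝ,
      max z 0 * max (w / a - z / b) 0 *
        (Real.exp (-z^2 / 2) / Real.sqrt (2 * π)) *
        (Real.exp (-w^2 / 2) / Real.sqrt (2 * π))
    = (1 / (2 * b * π)) * (b / a - Real.arctan (b / a)) := by
  have hπ : 0 < π := Real.pi_pos
  set c : ℝ := b / a with hc_def
  have hc : 0 < c := by positivity
  have hsqrt : Real.sqrt (2*π) * Real.sqrt (2*π) = 2*π := Real.mul_self_sqrt (by positivity)
  have hform : ∀ x : ℝ, Real.exp (-x^2/2) = Real.exp (-(2⁻¹:ℝ)*x^2) := by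
    intro x; congr 1; ring
  have step1 : ∀ w : ℝ,
      (∫ z : ℝ, max z 0 * max (w / a - z / b) 0 *
        (Real.exp (-z^2 / 2) / Real.sqrt (2 * π)) *
        (Real.exp (-w^2 / 2) / Real.sqrt (2 * π)))
      = ((max (c*w) 0 - ∫ t in (0:ℝ)..(max (c*w) 0), Real.exp (-t^2/2))
          * Real.exp (-w^2/2)) / (b * (2*π)) := by
    intro w
    rw [MeasureTheory.integral_mul_const, inner_eval a b ha hb w, ← hc_def,
      div_mul_div_comm, mul_assoc b, hsqrt]
  simp_rw [step1]
  rw [MeasureTheory.integral_div]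
  have hzero : ∀ w ∉ Ioi (0:ℝ),
      (max (c*w) 0 - ∫ t in (0:ℝ)..(max (c*w) 0), Real.exp (-t^2/2)) * Real.exp (-w^2/2) = 0 := by
    intro w hw
    simp only [mem_Ioi, not_lt] at hw
    have hm0 : max (c*w) 0 = 0 := max_eq_right (mul_nonpos_of_nonneg_of_nonpos hc.le hw)
    rw [hm0]; simp
  rw [← MeasureTheory.setIntegral_eq_integral_of_forall_compl_eq_zero hzero]
  rw [MeasureTheory.setIntegral_congr_fun (g := fun w => c*w*Real.exp (-w^2/2)
      - (∫ t in (0:ℝ)..(c*w), Real.exp (-t^2/2)) * Real.exp (-w^2/2)) measurableSet_Ioi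
    (by
      intro w hw
      simp only [mem_Ioi] at hw
      have hm : max (c*w) 0 = c*w := max_eq_left (by positivity)
      simp only [hm, sub_mul])]
  have I1 : IntegrableOn (fun w : ℝ => c*w*Real.exp (-w^2/2)) (Ioi 0) volume := by
    simp_rw [hform, mul_assoc]
    exact ((integrable_mul_exp_neg_mul_sq (by norm_num : (0:ℝ) < 2⁻¹)).integrableOn).const_mul c
  have Econt : Continuous (fun w : ℝ => ∫ t in (0:ℝ)..(c*w), Real.exp (-t^2/2)) := by
    have h1 : Continuous (fun y : ℝ => ∫ t in (0:ℝ)..y, Real.exp (-t^2/2)) :=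
      intervalIntegral.continuous_primitive
        (fun u v => (by fun_prop : Continuous fun t : ℝ => Real.exp (-t^2/2)).intervalIntegrable u v) 0
    exact h1.comp (continuous_const.mul continuous_id)
  have I2 : IntegrableOn
      (fun w : ℝ => (∫ t in (0:ℝ)..(c*w), Real.exp (-t^2/2)) * Real.exp (-w^2/2)) (Ioi 0) volume := by
    have hcont2 : Continuous (fun w : ℝ => Real.exp (-w^2/2)) := by fun_prop
    apply Integrable.mono I1 ((Econt.mul hcont2).aestronglyMeasurable.restrict)
    filter_upwards [ae_restrict_mem measurableSet_Ioi] with w hw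
    simp only [mem_Ioi] at hw
    have hcw : 0 < c*w := by positivity
    have hE : ‖∫ t in (0:ℝ)..(c*w), Real.exp (-t^2/2)‖ ≤ c*w := by
      have := intervalIntegral.norm_integral_le_of_norm_le_const (C := 1)
        (f := fun t : ℝ => Real.exp (-t^2/2)) (a := 0) (b := c*w) (by
          intro t _
          rw [Real.norm_eq_abs, abs_of_pos (Real.exp_pos _)]
          rw [show (1:ℝ) = Real.exp 0 from (Real.exp_zero).symm]
          exact Real.exp_le_exp.mpr (by nlinarith [sq_nonneg t]))
      simpa [abs_of_pos hcw] using this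
    simp only [Pi.mul_apply]
    rw [Real.norm_eq_abs, Real.norm_eq_abs, abs_mul, abs_mul,
      abs_of_pos (Real.exp_pos _), abs_of_pos hcw]
    have : |∫ t in (0:ℝ)..(c*w), Real.exp (-t^2/2)| ≤ c*w := hE
    exact mul_le_mul_of_nonneg_right this (Real.exp_pos _).le
  rw [MeasureTheory.integral_sub I1 I2]
  have val1 : ∫ w in Ioi (0:ℝ), c*w*Real.exp (-w^2/2) = c := by
    simp_rw [hform, mul_assoc]
    rw [MeasureTheory.integral_const_mul, gauss_Ioi 2⁻¹ (by norm_num)]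
    norm_num
  have val2 : ∫ w in Ioi (0:ℝ),
      (∫ t in (0:ℝ)..(c*w), Real.exp (-t^2/2)) * Real.exp (-w^2/2) = Real.arctan c := by
    rw [MeasureTheory.setIntegral_congr_fun (g := fun w =>
        ∫ s in Ioc (0:ℝ) c, w * Real.exp (-((1+s^2)/2) * w^2)) measurableSet_Ioi
      (by
        intro w hw
        simp only [mem_Ioi] at hw
        show (∫ t in (0:ℝ)..(c*w), Real.exp (-t^2/2)) * Real.exp (-w^2/2)
          = ∫ s in Ioc (0:ℝ) c, w * Real.exp (-((1+s^2)/2) * w^2)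
        have h1 : (∫ t in (0:ℝ)..(c*w), Real.exp (-t^2/2))
            = w * ∫ s in (0:ℝ)..c, Real.exp (-(w*s)^2/2) := by
          rw [intervalIntegral.integral_comp_mul_left (fun t => Real.exp (-t^2/2)) hw.ne',
            mul_zero, smul_eq_mul, ← mul_assoc, mul_inv_cancel₀ hw.ne', one_mul, mul_comm w c]
        rw [h1, mul_assoc, ← intervalIntegral.integral_mul_const,
          ← intervalIntegral.integral_const_mul, ← intervalIntegral.integral_of_le hc.le]
        apply intervalIntegral.integral_congr
        intro s _
        show w * (Real.exp (-(w*s)^2/2) * Real.exp (-w^2/2)) = _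
        rw [← Real.exp_add]
        congr 1
        ring)]
    have hbound : Integrable (fun p : ℝ × ℝ => p.1 * Real.exp (-(2⁻¹:ℝ) * p.1^2) * 1)
        ((volume.restrict (Ioi (0:ℝ))).prod (volume.restrict (Ioc (0:ℝ) c))) := by
      have : IsFiniteMeasure (volume.restrict (Ioc (0:ℝ) c)) :=
        ⟨by rw [Measure.restrict_apply_univ]; simp [Real.volume_Ioc]⟩
      exact ((integrable_mul_exp_neg_mul_sq (by norm_num : (0:ℝ) < 2⁻¹)).integrableOn).mul_prod
        (integrable_const 1)
    have hswap : Integrable (Function.uncurry fun w s : ℝ => w * Real.exp (-((1+s^2)/2) * w^2))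
        ((volume.restrict (Ioi (0:ℝ))).prod (volume.restrict (Ioc (0:ℝ) c))) := by
      apply hbound.mono
      · apply Continuous.aestronglyMeasurable
        fun_prop
      · apply Filter.Eventually.of_forall
        rintro ⟨w, s⟩
        simp only [Function.uncurry, mul_one, Real.norm_eq_abs, abs_mul,
          abs_of_pos (Real.exp_pos _)]
        apply mul_le_mul_of_nonneg_left _ (abs_nonneg w)
        exact Real.exp_le_exp.mpr (by nlinarith [sq_nonneg s, sq_nonneg w])
    rw [MeasureTheory.integral_integral_swap hswap]
    rw [MeasureTheory.setIntegral_congr_fun (g := fun s => (1+s^2)⁻¹) measurableSet_Ioc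
      (by
        intro s _
        show (∫ w in Ioi (0:ℝ), w * Real.exp (-((1+s^2)/2) * w^2)) = (1+s^2)⁻¹
        rw [gauss_Ioi ((1+s^2)/2) (by positivity)]
        congr 1
        ring)]
    rw [← intervalIntegral.integral_of_le hc.le]
    rw [integral_inv_one_add_sq]
    simp
  rw [val1, val2]
  rw [div_eq_mul_inv, mul_comm]
  congr 1
  rw [one_div]
  congr 1
  ring
end

section
/- Let 0 < v₁ < v₂. Then (2/(v₂ − v₁)^{3/2}) · ∫_ℝ ∫_ℝ max(z, 0) · max(x/√v₁ − z/√(v₂ − v₁), 0) · φ(z) φ(x) dz dx = (1/(π (v₂ − v₁)²)) · ( √((v₂ − v₁)/v₁) − arctan(√((v₂ − v₁)/v₁)) ). (This identifies Groeneboom's expectation formula for the joint density of the vertex times of the concave majorant of Brownian motion straddling a fixed time with its explicit closed form.) -/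
open Real Set MeasureTheory intervalIntegral Filter

noncomputable def Eint (c : ℝ) : ℝ := ∫ s in (0:ℝ)..c, Real.exp (-s^2/2)

lemma contg : Continuous fun s : ℝ => Real.exp (-s^2/2) := by fun_prop

lemma Eint_hasDerivAt (c : ℝ) : HasDerivAt Eint (Real.exp (-c^2/2)) c :=
  intervalIntegral.integral_hasDerivAt_right (contg.intervalIntegrable _ _)
    contg.stronglyMeasurable.stronglyMeasurableAtFilter contg.continuousAt

lemma exp_deriv_aux (a x : ℝ) (ha : a ≠ 0) :
    HasDerivAt (fun x : ℝ => -Real.exp (-x^2*a/2)/a) (x * Real.exp (-x^2*a/2)) x := by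
  have h1 : HasDerivAt (fun x : ℝ => -x^2*a/2) (-x*a) x := by
    have := ((hasDerivAt_pow 2 x).neg.mul_const a).div_const 2
    refine this.congr_deriv ?_
    ring
  have h2 := (h1.exp).neg.div_const a
  refine h2.congr_deriv ?_
  field_simp

lemma exp_tendsto_aux (a : ℝ) (ha : 0 < a) :
    Tendsto (fun x : ℝ => -Real.exp (-x^2*a/2)/a) atTop (nhds 0) := by
  have h1 : Tendsto (fun x : ℝ => -x^2*a/2) atTop atBot := by
    have h2 : Tendsto (fun x : ℝ => -x^2) atTop atBot :=
      tendsto_neg_atTop_atBot.comp (tendsto_pow_atTop two_ne_zero)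
    exact (h2.atBot_mul_const ha).atBot_div_const two_pos
  have := (Real.tendsto_exp_atBot.comp h1).neg.div_const a
  simpa using this

lemma exp_cont_aux (a : ℝ) :
    ContinuousWithinAt (fun x : ℝ => -Real.exp (-x^2*a/2)/a) (Ici 0) 0 := by
  have : Continuous fun x : ℝ => -Real.exp (-x^2*a/2)/a :=
    ((by fun_prop : Continuous fun x : ℝ => Real.exp (-x^2*a/2)).neg).div_const a
  exact this.continuousWithinAt

lemma exp_deriv_nonneg (a : ℝ) : ∀ x ∈ Ioi (0:ℝ), 0 ≤ x * Real.exp (-x^2*a/2) :=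
  fun x hx => mul_nonneg (le_of_lt hx) (Real.exp_nonneg _)

lemma gauss_moment (a : ℝ) (ha : 0 < a) :
    ∫ x in Ioi (0:ℝ), x * Real.exp (-x^2*a/2) = 1/a := by
  have := integral_Ioi_of_hasDerivAt_of_nonneg (exp_cont_aux a)
    (fun x _ => exp_deriv_aux a x ha.ne') (exp_deriv_nonneg a) (exp_tendsto_aux a ha)
  rw [this]
  norm_num
  ring

lemma gauss_moment_integrable (a : ℝ) (ha : 0 < a) :
    IntegrableOn (fun x => x * Real.exp (-x^2*a/2)) (Ioi (0:ℝ)) :=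
  integrableOn_Ioi_deriv_of_nonneg (exp_cont_aux a)
    (fun x _ => exp_deriv_aux a x ha.ne') (exp_deriv_nonneg a) (exp_tendsto_aux a ha)

lemma inner_ftc (α β x : ℝ) (hβ : 0 < β) :
    ∫ z in (0:ℝ)..(α*x/β), z * (α*x - β*z) * Real.exp (-z^2/2)
      = α*x - β * Eint (α*x/β) := by
  set c := α*x/β with hcdef
  have hc : β * c = α * x := by rw [hcdef]; field_simp
  have hder : ∀ z ∈ Set.uIcc (0:ℝ) c, HasDerivAt
      (fun z => (β*z - α*x) * Real.exp (-z^2/2) - β * Eint z)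
      (z * (α*x - β*z) * Real.exp (-z^2/2)) z := by
    intro z _
    have h1 : HasDerivAt (fun z : ℝ => -z^2/2) (-z) z := by
      have := (hasDerivAt_pow 2 z).neg.div_const 2
      refine this.congr_deriv ?_
      ring
    have h2 : HasDerivAt (fun z : ℝ => β*z - α*x) β z := by
      simpa using ((hasDerivAt_id z).const_mul β).sub_const (α*x)
    have h3 := (h2.mul h1.exp).sub ((Eint_hasDerivAt z).const_mul β)
    refine h3.congr_deriv ?_
    ring
  have h0 : Eint 0 = 0 := by simp [Eint]
  rw [intervalIntegral.integral_eq_sub_of_hasDerivAt hder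
    (Continuous.intervalIntegrable (by fun_prop) _ _)]
  rw [h0, show β*c - α*x = 0 by linarith [hc]]
  simp
  ring

lemma inner_eq (α β x : ℝ) (hα : 0 < α) (hβ : 0 < β) (hx : 0 < x) :
    (fun z => max z 0 * max (α*x - β*z) 0 * Real.exp (-z^2/2))
      = (Ioc (0:ℝ) (α*x/β)).indicator
          (fun z => z * (α*x - β*z) * Real.exp (-z^2/2)) := by
  funext z
  by_cases h1 : 0 < z
  · by_cases h2 : z ≤ α*x/β
    · rw [Set.indicator_of_mem (show z ∈ Ioc (0:ℝ) (α*x/β) from ⟨h1, h2⟩)]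
      have hz2 : 0 ≤ α*x - β*z := by
        rw [sub_nonneg]
        calc β*z ≤ β*(α*x/β) := by nlinarith
        _ = α*x := by field_simp
      rw [max_eq_left h1.le, max_eq_left hz2]
    · rw [indicator_of_notMem (by simp [h2])]
      have hz2 : α*x - β*z ≤ 0 := by
        rw [sub_nonpos]
        calc α*x = β*(α*x/β) := by field_simp
        _ ≤ β*z := by nlinarith [not_le.1 h2]
      rw [max_eq_right hz2]
      ring
  · rw [Set.indicator_of_notMem (fun hm => h1 hm.1)]
    rw [max_eq_right (not_lt.1 h1)]
    ring

lemma inner_integral (α β x : ℝ) (hα : 0 < α) (hβ : 0 < β) (hx : 0 < x) :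
    ∫ z : ℝ, max z 0 * max (α*x - β*z) 0 * Real.exp (-z^2/2)
      = α*x - β * Eint (α*x/β) := by
  rw [inner_eq α β x hα hβ hx, MeasureTheory.integral_indicator measurableSet_Ioc,
      ← intervalIntegral.integral_of_le (by positivity : (0:ℝ) ≤ α*x/β)]
  exact inner_ftc α β x hβ

lemma inner_zero (α β x z : ℝ) (hα : 0 < α) (hβ : 0 < β) (hx : x ≤ 0) :
    max z 0 * max (α*x - β*z) 0 * Real.exp (-z^2/2) = 0 := by
  by_cases h1 : 0 < z
  · have h2 : α*x - β*z ≤ 0 := by nlinarith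
    rw [max_eq_right h2]
    ring
  · rw [max_eq_right (not_lt.1 h1)]
    ring

lemma Eint_rep (γ x : ℝ) (hγ : 0 < γ) (hx : 0 < x) :
    Eint (γ*x) * Real.exp (-x^2/2)
      = ∫ t in Ioc (0:ℝ) γ, x * Real.exp (-x^2*(1+t^2)/2) := by
  rw [← intervalIntegral.integral_of_le hγ.le]
  have h1 : Eint (γ*x) = x * ∫ t in (0:ℝ)..γ, Real.exp (-(x*t)^2/2) := by
    rw [intervalIntegral.integral_comp_mul_left (fun s => Real.exp (-s^2/2)) hx.ne',
        smul_eq_mul, ← mul_assoc, mul_inv_cancel₀ hx.ne', one_mul]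
    simp [Eint, mul_comm γ x]
  calc Eint (γ*x) * Real.exp (-x^2/2)
      = ∫ t in (0:ℝ)..γ, (Real.exp (-(x*t)^2/2) * (x * Real.exp (-x^2/2))) := by
        rw [h1, intervalIntegral.integral_mul_const]
        ring
    _ = ∫ t in (0:ℝ)..γ, x * Real.exp (-x^2*(1+t^2)/2) := by
        apply intervalIntegral.integral_congr
        intro t _
        have h := Real.exp_add (-(x*t)^2/2) (-x^2/2)
        dsimp only
        rw [show -x^2*(1+t^2)/2 = -(x*t)^2/2 + -x^2/2 by ring, h]
        ring

lemma swap_lemma (γ : ℝ) (hγ : 0 < γ) :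
    ∫ x in Ioi (0:ℝ), ∫ t in Ioc (0:ℝ) γ, x * Real.exp (-x^2*(1+t^2)/2)
      = ∫ t in Ioc (0:ℝ) γ, ∫ x in Ioi (0:ℝ), x * Real.exp (-x^2*(1+t^2)/2) := by
  apply MeasureTheory.integral_integral_swap
  apply Integrable.mono' (g := fun p : ℝ × ℝ => (p.1 * Real.exp (-p.1^2*1/2)) * 1)
  · exact (gauss_moment_integrable 1 one_pos).mul_prod (integrable_const 1)
  · exact ((continuous_fst.mul (by fun_prop)).aestronglyMeasurable)
  · rw [Measure.prod_restrict]
    filter_upwards [ae_restrict_mem (measurableSet_Ioi.prod measurableSet_Ioc)] with p hp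
    obtain ⟨hp1, hp2, _⟩ := hp
    have hx : (0:ℝ) < p.1 := hp1
    have hb : -p.1^2*(1+p.2^2)/2 ≤ -p.1^2*1/2 := by nlinarith [sq_nonneg p.2, sq_nonneg p.1]
    simp only [Function.uncurry, Real.norm_eq_abs]
    rw [abs_of_nonneg (mul_nonneg hx.le (Real.exp_nonneg _)), mul_one]
    exact mul_le_mul_of_nonneg_left (Real.exp_le_exp.2 hb) hx.le

lemma lemD (γ : ℝ) (hγ : 0 < γ) :
    ∫ x in Ioi (0:ℝ), Eint (γ*x) * Real.exp (-x^2/2) = Real.arctan γ := by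
  rw [setIntegral_congr_fun measurableSet_Ioi (fun x hx => Eint_rep γ x hγ hx),
      swap_lemma γ hγ,
      setIntegral_congr_fun measurableSet_Ioc
        (fun t _ => gauss_moment (1+t^2) (by positivity)),
      ← intervalIntegral.integral_of_le hγ.le]
  simp [integral_one_div_one_add_sq]

lemma exp_half_integrable : Integrable (fun s : ℝ => Real.exp (-s^2/2)) := by
  have h := integrable_exp_neg_mul_sq (by norm_num : (0:ℝ) < 1/2)
  exact h.congr (Filter.Eventually.of_forall fun s => by ring_nf)

lemma Eint_nonneg (c : ℝ) (hc : 0 ≤ c) : 0 ≤ Eint c :=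
  intervalIntegral.integral_nonneg hc (fun s _ => Real.exp_nonneg _)

lemma Eint_le (c : ℝ) (hc : 0 ≤ c) :
    Eint c ≤ ∫ s in Ioi (0:ℝ), Real.exp (-s^2/2) := by
  rw [Eint, intervalIntegral.integral_of_le hc]
  exact setIntegral_mono_set exp_half_integrable.integrableOn
    (Filter.Eventually.of_forall fun s => Real.exp_nonneg _)
    (HasSubset.Subset.eventuallyLE (fun s hs => hs.1))

lemma Eint_continuous : Continuous Eint :=
  continuous_iff_continuousAt.2 fun c => (Eint_hasDerivAt c).continuousAt

lemma Eterm_integrable (γ : ℝ) (hγ : 0 < γ) :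
    IntegrableOn (fun x => Eint (γ*x) * Real.exp (-x^2/2)) (Ioi (0:ℝ)) := by
  apply Integrable.mono'
    (g := fun x => (∫ s in Ioi (0:ℝ), Real.exp (-s^2/2)) * Real.exp (-x^2/2))
  · exact (exp_half_integrable.integrableOn).const_mul _
  · exact ((Eint_continuous.comp (continuous_const.mul continuous_id)).mul
      (by fun_prop)).aestronglyMeasurable
  · filter_upwards [ae_restrict_mem measurableSet_Ioi] with x hx
    have hgx : 0 ≤ γ * x := mul_nonneg hγ.le (le_of_lt hx)
    rw [Real.norm_eq_abs, abs_of_nonneg (mul_nonneg (Eint_nonneg _ hgx) (Real.exp_nonneg _))]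
    exact mul_le_mul_of_nonneg_right (Eint_le _ hgx) (Real.exp_nonneg _)

lemma xexp_integrable : IntegrableOn (fun x => x * Real.exp (-x^2/2)) (Ioi (0:ℝ)) :=
  (gauss_moment_integrable 1 one_pos).congr (Filter.Eventually.of_forall fun x => by norm_num)

lemma xexp_integral : ∫ x in Ioi (0:ℝ), x * Real.exp (-x^2/2) = 1 := by
  rw [setIntegral_congr_fun measurableSet_Ioi
    (fun x _ => show x * Real.exp (-x^2/2) = x * Real.exp (-x^2*1/2) by norm_num),
    gauss_moment 1 one_pos]
  norm_num

lemma outer (α β γ : ℝ) (hα : 0 < α) (hβ : 0 < β) (hγ : 0 < γ) :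
    ∫ x in Ioi (0:ℝ), (α*x - β * Eint (γ*x)) * Real.exp (-x^2/2)
      = α - β * Real.arctan γ := by
  have h1 : IntegrableOn (fun x => α*(x * Real.exp (-x^2/2))) (Ioi (0:ℝ)) :=
    xexp_integrable.const_mul α
  have h2 : IntegrableOn (fun x => β*(Eint (γ*x) * Real.exp (-x^2/2))) (Ioi (0:ℝ)) :=
    (Eterm_integrable γ hγ).const_mul β
  rw [setIntegral_congr_fun measurableSet_Ioi
    (fun x _ => show (α*x - β * Eint (γ*x)) * Real.exp (-x^2/2)
      = α*(x*Real.exp (-x^2/2)) - β*(Eint (γ*x) * Real.exp (-x^2/2)) by ring)]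
  rw [integral_sub h1 h2, MeasureTheory.integral_const_mul, MeasureTheory.integral_const_mul,
    xexp_integral, lemD γ hγ, mul_one]

lemma core (a b : ℝ) (ha : 0 < a) (hb : 0 < b) :
    ∫ x : ℝ, ∫ z : ℝ, max z 0 * max (x / a - z / b) 0 *
        (Real.exp (-z^2 / 2) / Real.sqrt (2 * π)) *
        (Real.exp (-x^2 / 2) / Real.sqrt (2 * π))
      = (a⁻¹ - b⁻¹ * Real.arctan (b/a)) / (2*π) := by
  have hπ : (0:ℝ) < π := Real.pi_pos
  have hsq : Real.sqrt (2*π) * Real.sqrt (2*π) = 2*π := Real.mul_self_sqrt (by positivity)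
  have hsqne : Real.sqrt (2*π) ≠ 0 := by positivity
  have hα : 0 < a⁻¹ := inv_pos.2 ha
  have hβ : 0 < b⁻¹ := inv_pos.2 hb
  have hγ : 0 < b/a := div_pos hb ha
  have key : ∀ x : ℝ, (∫ z : ℝ, max z 0 * max (x / a - z / b) 0 *
        (Real.exp (-z^2 / 2) / Real.sqrt (2 * π)) *
        (Real.exp (-x^2 / 2) / Real.sqrt (2 * π)))
      = (Ioi (0:ℝ)).indicator
          (fun x => ((a⁻¹*x - b⁻¹ * Eint ((b/a)*x)) * Real.exp (-x^2/2)) / (2*π)) x := by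
    intro x
    have hgroup : ∀ z : ℝ, max z 0 * max (x / a - z / b) 0 *
          (Real.exp (-z^2 / 2) / Real.sqrt (2 * π)) *
          (Real.exp (-x^2 / 2) / Real.sqrt (2 * π))
        = (max z 0 * max (a⁻¹*x - b⁻¹*z) 0 * Real.exp (-z^2/2))
            * (Real.exp (-x^2/2) / (2*π)) := by
      intro z
      have h2 : (Real.exp (-z^2/2) / Real.sqrt (2*π)) * (Real.exp (-x^2/2) / Real.sqrt (2*π))
          = Real.exp (-z^2/2) * (Real.exp (-x^2/2) / (2*π)) := by
        rw [div_mul_div_comm, hsq, mul_div_assoc]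
      rw [show x / a = a⁻¹*x by ring, show z / b = b⁻¹*z by ring, mul_assoc, h2, ← mul_assoc]
    simp only [hgroup]
    rw [MeasureTheory.integral_mul_const]
    by_cases hx : 0 < x
    · rw [inner_integral _ _ x hα hβ hx, Set.indicator_of_mem (show x ∈ Ioi (0:ℝ) from hx),
        show a⁻¹*x/b⁻¹ = b/a*x by rw [div_inv_eq_mul]; ring]
      ring
    · rw [Set.indicator_of_notMem (by simpa using hx)]
      rw [show (fun z => max z 0 * max (a⁻¹*x - b⁻¹*z) 0 * Real.exp (-z^2/2)) = fun _ => (0:ℝ)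
        from funext fun z => inner_zero _ _ x z hα hβ (not_lt.1 hx)]
      simp
  calc (∫ x : ℝ, ∫ z : ℝ, max z 0 * max (x / a - z / b) 0 *
        (Real.exp (-z^2 / 2) / Real.sqrt (2 * π)) *
        (Real.exp (-x^2 / 2) / Real.sqrt (2 * π)))
      = ∫ x : ℝ, (Ioi (0:ℝ)).indicator
          (fun x => ((a⁻¹*x - b⁻¹ * Eint ((b/a)*x)) * Real.exp (-x^2/2)) / (2*π)) x := by
        simp only [key]
    _ = ∫ x in Ioi (0:ℝ), ((a⁻¹*x - b⁻¹ * Eint ((b/a)*x)) * Real.exp (-x^2/2)) / (2*π) :=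
        MeasureTheory.integral_indicator measurableSet_Ioi
    _ = (∫ x in Ioi (0:ℝ), (a⁻¹*x - b⁻¹ * Eint ((b/a)*x)) * Real.exp (-x^2/2)) / (2*π) :=
        integral_div _ _
    _ = (a⁻¹ - b⁻¹ * Real.arctan (b/a)) / (2*π) := by rw [outer _ _ _ hα hβ hγ]

theorem groeneboom_vertex_density_explicit
    (v₁ v₂ : ℝ) (hv₁ : 0 < v₁) (hv₁₂ : v₁ < v₂) :
    (2 / (v₂ - v₁) ^ ((3:ℝ)/2)) *
      ∫ x : ℝ, ∫ z : ℝ,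
        max z 0 * max (x / Real.sqrt v₁ - z / Real.sqrt (v₂ - v₁)) 0 *
          (Real.exp (-z^2 / 2) / Real.sqrt (2 * π)) *
          (Real.exp (-x^2 / 2) / Real.sqrt (2 * π))
    = (1 / (π * (v₂ - v₁)^2)) *
        (Real.sqrt ((v₂ - v₁) / v₁) - Real.arctan (Real.sqrt ((v₂ - v₁) / v₁))) := by
  have hd : (0:ℝ) < v₂ - v₁ := by linarith
  have ht : 0 < Real.sqrt v₁ := Real.sqrt_pos.2 hv₁
  have hs : 0 < Real.sqrt (v₂ - v₁) := Real.sqrt_pos.2 hd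
  have hπ : (0:ℝ) < π := Real.pi_pos
  have hs2 : Real.sqrt (v₂ - v₁) ^ 2 = v₂ - v₁ := Real.sq_sqrt hd.le
  have h1 : Real.sqrt ((v₂ - v₁) / v₁) = Real.sqrt (v₂ - v₁) / Real.sqrt v₁ :=
    Real.sqrt_div hd.le v₁
  have hpow : (v₂ - v₁) ^ ((3:ℝ)/2) = (Real.sqrt (v₂ - v₁))^3 := by
    rw [Real.sqrt_eq_rpow, ← Real.rpow_natCast ((v₂ - v₁) ^ ((1:ℝ)/2)) 3,
      ← Real.rpow_mul hd.le]
    norm_num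
  rw [core (Real.sqrt v₁) (Real.sqrt (v₂ - v₁)) ht hs, h1, hpow,
    show ((v₂ - v₁)^2 : ℝ) = (Real.sqrt (v₂ - v₁))^4 by
      rw [show (Real.sqrt (v₂ - v₁))^4 = ((Real.sqrt (v₂ - v₁))^2)^2 by ring, hs2]]
  field_simp
end

section
/- For every z > 0, (1/2) ∫₀^∞ t^{−1} e^{−1/t} e^{−z² t / 4} dt = e^{−z} ∫_{−∞}^{∞} e^{−u²} (u² + 2z)^{−1/2} du. (Both sides equal the modified Bessel function K₀(z); this is the key integral representation used in the paper's identity (Bₙ).) -/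
open Real Set MeasureTheory

lemma besselK0_aux1 (z : ℝ) (hz : 0 < z) :
    ∫ t in Set.Ioi (0:ℝ), t⁻¹ * Real.exp (-1/t) * Real.exp (-z^2 * t / 4)
    = ∫ θ : ℝ, Real.exp (-z * Real.cosh θ) := by
  have hz' : z ≠ 0 := hz.ne'
  have himg : (fun θ : ℝ => (2/z) * Real.exp θ) '' Set.univ = Set.Ioi (0:ℝ) := by
    ext x
    simp only [Set.image_univ, Set.mem_range, Set.mem_Ioi]
    constructor
    · rintro ⟨θ, rfl⟩
      positivity
    · intro hx
      exact ⟨Real.log (z * x / 2), by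
        rw [Real.exp_log (by positivity)]; field_simp⟩
  have hinj : Set.InjOn (fun θ : ℝ => (2/z) * Real.exp θ) Set.univ := by
    intro a _ b _ h
    simp only [mul_eq_mul_left_iff, div_eq_zero_iff] at h
    rcases h with h | h
    · exact Real.exp_injective h
    · norm_num [hz'] at h
  have key := MeasureTheory.integral_image_eq_integral_abs_deriv_smul
    (s := Set.univ) (f := fun θ : ℝ => (2/z) * Real.exp θ)
    (f' := fun θ : ℝ => (2/z) * Real.exp θ) MeasurableSet.univ
    (fun x _ => ((Real.hasDerivAt_exp x).const_mul (2/z)).hasDerivWithinAt)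
    hinj
    (fun t => t⁻¹ * Real.exp (-1/t) * Real.exp (-z^2 * t / 4))
  rw [himg] at key
  rw [key, MeasureTheory.setIntegral_univ]
  congr 1
  ext θ
  have he : (0:ℝ) < Real.exp θ := Real.exp_pos θ
  have habs : |(2/z) * Real.exp θ| = (2/z) * Real.exp θ := abs_of_pos (by positivity)
  rw [habs]
  simp only [smul_eq_mul]
  have h1 : 2 / z * rexp θ * ((2 / z * rexp θ)⁻¹ * rexp (-1 / (2 / z * rexp θ)) *
      rexp (-z ^ 2 * (2 / z * rexp θ) / 4))
      = rexp (-1 / (2 / z * rexp θ)) * rexp (-z ^ 2 * (2 / z * rexp θ) / 4) := by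
    field_simp
  rw [h1, ← Real.exp_add]
  congr 1
  rw [Real.cosh_eq, Real.exp_neg]
  field_simp
  ring

lemma besselK0_aux2 (z : ℝ) (hz : 0 < z) :
    ∫ u : ℝ, Real.exp (-u^2) / Real.sqrt (u^2 + 2*z)
    = ∫ θ : ℝ, (1/2) * Real.exp z * Real.exp (-z * Real.cosh θ) := by
  set c := Real.sqrt (2*z) with hc
  have hcpos : 0 < c := Real.sqrt_pos.mpr (by linarith)
  have hcsq : c^2 = 2*z := Real.sq_sqrt (by linarith)
  have himg : (fun θ : ℝ => c * Real.sinh (θ/2)) '' Set.univ = Set.univ := by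
    ext u
    simp only [Set.image_univ, Set.mem_range, Set.mem_univ, iff_true]
    exact ⟨2 * Real.arsinh (u / c), by
      rw [show 2 * Real.arsinh (u / c) / 2 = Real.arsinh (u / c) by ring,
        Real.sinh_arsinh]; field_simp⟩
  have hinj : Set.InjOn (fun θ : ℝ => c * Real.sinh (θ/2)) Set.univ := by
    intro a _ b _ h
    simp only at h
    have := Real.sinh_injective (mul_left_cancel₀ hcpos.ne' h)
    linarith
  have hderiv : ∀ θ : ℝ, HasDerivAt (fun θ : ℝ => c * Real.sinh (θ/2))
      (c * (Real.cosh (θ/2) * (1/2))) θ := by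
    intro θ
    have h1 : HasDerivAt (fun θ : ℝ => θ/2) (1/2) θ := (hasDerivAt_id θ).div_const 2
    exact ((Real.hasDerivAt_sinh (θ/2)).comp θ h1).const_mul c
  have key := MeasureTheory.integral_image_eq_integral_abs_deriv_smul
    (s := Set.univ) (f := fun θ : ℝ => c * Real.sinh (θ/2))
    (f' := fun θ : ℝ => c * (Real.cosh (θ/2) * (1/2))) MeasurableSet.univ
    (fun x _ => (hderiv x).hasDerivWithinAt) hinj
    (fun u => Real.exp (-u^2) / Real.sqrt (u^2 + 2*z))
  rw [himg] at key
  rw [← MeasureTheory.setIntegral_univ, key, MeasureTheory.setIntegral_univ]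
  congr 1
  ext θ
  have hch : (0:ℝ) < Real.cosh (θ/2) := Real.cosh_pos _
  have habs : |c * (Real.cosh (θ/2) * (1/2))| = c * (Real.cosh (θ/2) * (1/2)) :=
    abs_of_pos (by positivity)
  rw [habs]
  simp only [smul_eq_mul]
  have hu2 : (c * Real.sinh (θ/2))^2 = 2*z * Real.sinh (θ/2)^2 := by
    rw [mul_pow, hcsq]
  have hsq : (c * Real.sinh (θ/2))^2 + 2*z = (c * Real.cosh (θ/2))^2 := by
    rw [hu2, mul_pow, hcsq]
    have := Real.cosh_sq (θ/2)
    nlinarith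
  rw [hsq, Real.sqrt_sq (by positivity)]
  have hexp : -(c * Real.sinh (θ/2))^2 = z + -z * Real.cosh θ := by
    rw [hu2]
    have h1 : Real.cosh θ = 2 * Real.cosh (θ/2)^2 - 1 := by
      rw [show θ = 2 * (θ/2) by ring, Real.cosh_two_mul, Real.sinh_sq]
      ring_nf
    have h2 := Real.cosh_sq (θ/2)
    nlinarith
  rw [hexp, Real.exp_add]
  field_simp

theorem besselK0_integral_representation (z : ℝ) (hz : 0 < z) :
    (1/2) * ∫ t in Set.Ioi (0:ℝ), t⁻¹ * Real.exp (-1/t) * Real.exp (-z^2 * t / 4)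
    = Real.exp (-z) * ∫ u : ℝ, Real.exp (-u^2) / Real.sqrt (u^2 + 2*z) := by
  rw [besselK0_aux1 z hz, besselK0_aux2 z hz]
  have : ∫ θ : ℝ, (1/2) * Real.exp z * Real.exp (-z * Real.cosh θ)
      = ((1/2) * Real.exp z) * ∫ θ : ℝ, Real.exp (-z * Real.cosh θ) :=
    MeasureTheory.integral_const_mul _ _
  rw [this, ← mul_assoc, ← mul_assoc]
  have h := Real.exp_neg z
  have hpos := (Real.exp_pos z).ne'
  field_simp [h]
  rw [h, mul_assoc, inv_mul_cancel₀ hpos, mul_one]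
end

section
/- For every z > 0, the function φ(z) = ∫₀^∞ t^{−2} e^{−1/t} e^{−z² t / 4} dt is differentiable at z with derivative φ'(z) = −(z/2) ∫₀^∞ t^{−1} e^{−1/t} e^{−z² t / 4} dt. (This is the differentiation-under-the-integral step used to identify ∫₀^∞ t^{−2} e^{−1/t} e^{−z² t/4} dt with z K₁(z).) -/
open Real Set MeasureTheory

lemma aux_inv_exp_le {t : ℝ} (ht : 0 < t) : t⁻¹ * Real.exp (-1/t) ≤ 1 := by
  have h1 : Real.exp (-1/t) ≤ t := by
    rw [neg_div, Real.exp_neg]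
    have h2 : 1/t ≤ Real.exp (1/t) := by
      have := Real.add_one_le_exp (1/t)
      linarith
    rw [inv_le_comm₀ (Real.exp_pos _) ht, ← one_div]
    exact h2
  calc t⁻¹ * Real.exp (-1/t) ≤ t⁻¹ * t := by
        exact mul_le_mul_of_nonneg_left h1 (by positivity)
    _ = 1 := inv_mul_cancel₀ ht.ne'

lemma aux_inv_sq_exp_le {t : ℝ} (ht : 0 < t) : (t⁻¹)^2 * Real.exp (-1/t) ≤ 4 := by
  have h1 : Real.exp (-1/t) ≤ 4 * t^2 := by
    rw [neg_div, Real.exp_neg]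
    have h2 : 1/(2*t) ≤ Real.exp (1/(2*t)) := by
      have := Real.add_one_le_exp (1/(2*t))
      linarith
    have h3 : (1/(2*t))^2 ≤ Real.exp (1/t) := by
      have : Real.exp (1/t) = Real.exp (1/(2*t)) ^ 2 := by
        rw [← Real.exp_nat_mul]; ring_nf
      rw [this]
      have h4 : (0:ℝ) ≤ 1/(2*t) := by positivity
      exact pow_le_pow_left₀ h4 h2 2
    rw [inv_le_comm₀ (Real.exp_pos _) (by positivity)]
    calc (4*t^2)⁻¹ = (1/(2*t))^2 := by field_simp; ring
      _ ≤ Real.exp (1/t) := h3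
  calc (t⁻¹)^2 * Real.exp (-1/t) ≤ (t⁻¹)^2 * (4*t^2) := by
        exact mul_le_mul_of_nonneg_left h1 (by positivity)
    _ = 4 := by field_simp

lemma meas_aux1 (a : ℝ) :
    Measurable fun t : ℝ => (t⁻¹)^2 * Real.exp (-1/t) * Real.exp (a * t / 4) :=
  ((measurable_inv.pow_const 2).mul
    (Real.measurable_exp.comp (measurable_const.div measurable_id))).mul
    (Real.measurable_exp.comp ((measurable_id.const_mul a).div_const 4))

lemma meas_aux2 (a c : ℝ) :
    Measurable fun t : ℝ => c * (t⁻¹ * Real.exp (-1/t) * Real.exp (a * t / 4)) :=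
  (((measurable_inv.mul
    (Real.measurable_exp.comp (measurable_const.div measurable_id))).mul
    (Real.measurable_exp.comp ((measurable_id.const_mul a).div_const 4))).const_mul c)

theorem deriv_besselK1_integral (z : ℝ) (hz : 0 < z) :
    HasDerivAt
      (fun s : ℝ => ∫ t in Set.Ioi (0:ℝ), (t⁻¹)^2 * Real.exp (-1/t) * Real.exp (-s^2 * t / 4))
      (-(z/2) * ∫ t in Set.Ioi (0:ℝ), t⁻¹ * Real.exp (-1/t) * Real.exp (-z^2 * t / 4))
      z := by
  have hb : (0:ℝ) < (z/2)^2/4 := by positivity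
  have key := hasDerivAt_integral_of_dominated_loc_of_deriv_le
    (𝕜 := ℝ)
    (F := fun s t => (t⁻¹)^2 * Real.exp (-1/t) * Real.exp (-s^2 * t / 4))
    (F' := fun s t => -(s/2) * (t⁻¹ * Real.exp (-1/t) * Real.exp (-s^2 * t / 4)))
    (μ := volume.restrict (Set.Ioi (0:ℝ))) (x₀ := z)
    (bound := fun t => (3*z/4) * Real.exp (-((z/2)^2/4) * t))
    (Metric.ball_mem_nhds z (half_pos hz))
    (Filter.Eventually.of_forall fun s => (meas_aux1 (-s^2)).aestronglyMeasurable)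
    ?_ ((meas_aux2 (-z^2) (-(z/2))).aestronglyMeasurable) ?_ ((exp_neg_integrableOn_Ioi 0 hb).const_mul _) ?_
  · rw [← MeasureTheory.integral_const_mul]
    exact key.2
  · -- integrability of F z
    apply MeasureTheory.Integrable.mono' ((exp_neg_integrableOn_Ioi 0 (show (0:ℝ) < z^2/4 by positivity)).const_mul 4)
    · exact (meas_aux1 (-z^2)).aestronglyMeasurable
    · filter_upwards [ae_restrict_mem measurableSet_Ioi] with t ht
      have h1 := aux_inv_sq_exp_le ht
      have h2 : (0:ℝ) ≤ (t⁻¹)^2 * Real.exp (-1/t) := by positivity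
      rw [Real.norm_eq_abs, abs_of_nonneg (by positivity)]
      have : Real.exp (-z^2 * t / 4) = Real.exp (-(z^2/4) * t) := by ring_nf
      rw [this]
      have := Real.exp_pos (-(z^2/4) * t)
      nlinarith
  · -- bound
    filter_upwards [ae_restrict_mem measurableSet_Ioi] with t ht s hs
    rw [Metric.mem_ball, Real.dist_eq, abs_sub_lt_iff] at hs
    have hs1 : z/2 < s := by linarith
    have hs2 : s < 3*z/2 := by linarith
    have hs0 : 0 < s := lt_trans (by positivity) hs1
    have ht0 : 0 < t := ht
    have hie : (0:ℝ) ≤ t⁻¹ * Real.exp (-1/t) :=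
      mul_nonneg (inv_nonneg.2 ht0.le) (Real.exp_pos _).le
    rw [norm_mul, Real.norm_eq_abs, Real.norm_eq_abs, abs_neg,
      abs_of_pos (half_pos hs0), abs_of_nonneg (mul_nonneg hie (Real.exp_pos _).le)]
    have h1 := aux_inv_exp_le ht
    have hexp : Real.exp (-s^2 * t / 4) ≤ Real.exp (-((z/2)^2/4) * t) := by
      apply Real.exp_le_exp.2
      have : (z/2)^2 ≤ s^2 := by nlinarith
      nlinarith [mul_le_mul_of_nonneg_right this ht0.le]
    have hexp_pos := Real.exp_pos (-s^2 * t / 4)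
    have hepos2 := Real.exp_pos (-((z/2)^2/4) * t)
    calc s/2 * (t⁻¹ * Real.exp (-1/t) * Real.exp (-s^2 * t / 4))
        ≤ s/2 * (1 * Real.exp (-((z/2)^2/4) * t)) := by
          apply mul_le_mul_of_nonneg_left _ (by positivity)
          apply mul_le_mul h1 hexp (le_of_lt hexp_pos) zero_le_one
      _ ≤ 3*z/4 * Real.exp (-((z/2)^2/4) * t) := by nlinarith
  · -- differentiability
    filter_upwards [ae_restrict_mem measurableSet_Ioi] with t ht s _
    have h : HasDerivAt (fun s : ℝ => -s^2 * t / 4) (-(2*s) * t / 4) s := by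
      have := ((hasDerivAt_pow 2 s).neg.mul_const t).div_const 4
      simpa using this
    have h2 := (h.exp).const_mul ((t⁻¹)^2 * Real.exp (-1/t))
    refine h2.congr_deriv ?_
    have : t ≠ 0 := ht.ne'
    have e : (t⁻¹)^2 * t = t⁻¹ := by rw [pow_two, mul_assoc, inv_mul_cancel₀ this, mul_one]
    linear_combination (-(s/2) * Real.exp (-1/t) * Real.exp (-s^2 * t / 4)) * e
end

section
/- For every b > 0, ∫₀^π arctan(b / sin(t)) · sin(t) dt = π (1 + b − √(1 + b²)). -/
open Real Set MeasureTheory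

theorem integral_arctan_div_sin_mul_sin
    (b : ℝ) (hb : 0 < b) :
    ∫ t in Set.Ioo (0:ℝ) π, Real.arctan (b / Real.sin t) * Real.sin t
    = π * (1 + b - Real.sqrt (1 + b^2)) := by
  set s : ℝ := Real.sqrt (1 + b^2) with hs_def
  have hs_pos : 0 < s := Real.sqrt_pos.mpr (by positivity)
  have hs_sq : s ^ 2 = 1 + b ^ 2 := Real.sq_sqrt (by positivity)
  set G : ℝ → ℝ := fun t =>
    Real.cos t * Real.arctan (Real.sin t / b) - π / 2 * Real.cos t
      + s * Real.arcsin (b * Real.cos t / Real.sqrt (Real.sin t ^ 2 + b ^ 2))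
      + b * t with hG_def
  have hsqrt_pos : ∀ t : ℝ, 0 < Real.sqrt (Real.sin t ^ 2 + b ^ 2) := fun t =>
    Real.sqrt_pos.mpr (by positivity)
  -- continuity of G
  have hGcont : Continuous G := by
    apply Continuous.add
    apply Continuous.add
    apply Continuous.sub
    · exact Real.continuous_cos.mul (Real.continuous_arctan.comp
        (Real.continuous_sin.div_const b))
    · exact continuous_const.mul Real.continuous_cos
    · refine continuous_const.mul (Real.continuous_arcsin.comp ?_)
      exact (continuous_const.mul Real.continuous_cos).div
        ((Real.continuous_sin.pow 2).add continuous_const).sqrt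
        (fun t => (hsqrt_pos t).ne')
    · exact continuous_const.mul continuous_id
  -- derivative of G on Ioo 0 π
  have hGderiv : ∀ t ∈ Set.Ioo (0:ℝ) π,
      HasDerivAt G (Real.arctan (b / Real.sin t) * Real.sin t) t := by
    intro t ht
    have hsin : 0 < Real.sin t := Real.sin_pos_of_pos_of_lt_pi ht.1 ht.2
    have hsin' : Real.sin t ≠ 0 := hsin.ne'
    -- first term
    have h1 : HasDerivAt (fun τ => Real.cos τ * Real.arctan (Real.sin τ / b))
        (-Real.sin t * Real.arctan (Real.sin t / b)
          + Real.cos t * (1 / (1 + (Real.sin t / b) ^ 2) * (Real.cos t / b))) t := by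
      exact (Real.hasDerivAt_cos t).mul
        ((Real.hasDerivAt_arctan (Real.sin t / b)).comp (h := fun τ => Real.sin τ / b) t
          ((Real.hasDerivAt_sin t).div_const b))
    -- second term
    have h2 : HasDerivAt (fun τ => π / 2 * Real.cos τ) (π / 2 * -Real.sin t) t :=
      (Real.hasDerivAt_cos t).const_mul (π / 2)
    -- third term via eventual equality with arctan form
    have hw : HasDerivAt (fun τ => b * Real.cos τ / (s * Real.sin τ))
        ((b * -Real.sin t * (s * Real.sin t) - b * Real.cos t * (s * Real.cos t))
          / (s * Real.sin t) ^ 2) t := by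
      exact ((Real.hasDerivAt_cos t).const_mul b).div
        ((Real.hasDerivAt_sin t).const_mul s) (by positivity)
    have h3' : HasDerivAt (fun τ => Real.arctan (b * Real.cos τ / (s * Real.sin τ)))
        (1 / (1 + (b * Real.cos t / (s * Real.sin t)) ^ 2)
          * ((b * -Real.sin t * (s * Real.sin t) - b * Real.cos t * (s * Real.cos t))
              / (s * Real.sin t) ^ 2)) t :=
      (Real.hasDerivAt_arctan _).comp t hw
    have heq : (fun τ => Real.arcsin (b * Real.cos τ / Real.sqrt (Real.sin τ ^ 2 + b ^ 2)))
        =ᶠ[nhds t] (fun τ => Real.arctan (b * Real.cos τ / (s * Real.sin τ))) := by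
      have hopen : IsOpen {τ : ℝ | 0 < Real.sin τ} := isOpen_lt continuous_const Real.continuous_sin
      filter_upwards [hopen.mem_nhds hsin] with τ hτ
      have hτ' : Real.sin τ ≠ 0 := ne_of_gt hτ
      rw [Real.arctan_eq_arcsin]
      congr 1
      rw [div_div]
      congr 1
      have : 1 + (b * Real.cos τ / (s * Real.sin τ)) ^ 2
          = (Real.sin τ ^ 2 + b ^ 2) / (s * Real.sin τ) ^ 2 := by
        field_simp
        nlinarith [hs_sq, Real.sin_sq_add_cos_sq τ]
      rw [this, Real.sqrt_div (by positivity) ((s * Real.sin τ) ^ 2),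
        Real.sqrt_sq (by positivity : (0:ℝ) ≤ s * Real.sin τ)]
      field_simp
    have h3 : HasDerivAt (fun τ => Real.arcsin (b * Real.cos τ / Real.sqrt (Real.sin τ ^ 2 + b ^ 2)))
        (1 / (1 + (b * Real.cos t / (s * Real.sin t)) ^ 2)
          * ((b * -Real.sin t * (s * Real.sin t) - b * Real.cos t * (s * Real.cos t))
              / (s * Real.sin t) ^ 2)) t :=
      h3'.congr_of_eventuallyEq heq
    have h4 : HasDerivAt (fun τ : ℝ => b * τ) b t := by
      simpa using (hasDerivAt_id t).const_mul b
    have hG : HasDerivAt G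
        ((-Real.sin t * Real.arctan (Real.sin t / b)
          + Real.cos t * (1 / (1 + (Real.sin t / b) ^ 2) * (Real.cos t / b)))
          - π / 2 * -Real.sin t
          + s * (1 / (1 + (b * Real.cos t / (s * Real.sin t)) ^ 2)
            * ((b * -Real.sin t * (s * Real.sin t) - b * Real.cos t * (s * Real.cos t))
                / (s * Real.sin t) ^ 2))
          + b) t :=
      ((h1.sub h2).add (h3.const_mul s)).add h4
    convert hG using 1
    have harct : Real.arctan (b / Real.sin t) = π / 2 - Real.arctan (Real.sin t / b) := by
      rw [show b / Real.sin t = (Real.sin t / b)⁻¹ by rw [inv_div]]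
      exact Real.arctan_inv_of_pos (by positivity)
    have hpyth := Real.sin_sq_add_cos_sq t
    have hzero : Real.cos t * (1 / (1 + (Real.sin t / b) ^ 2) * (Real.cos t / b))
        + s * (1 / (1 + (b * Real.cos t / (s * Real.sin t)) ^ 2)
            * ((b * -Real.sin t * (s * Real.sin t) - b * Real.cos t * (s * Real.cos t))
                / (s * Real.sin t) ^ 2))
        + b = 0 := by
      have e1 : 1 + (Real.sin t / b) ^ 2 = (b ^ 2 + Real.sin t ^ 2) / b ^ 2 := by
        field_simp
      have e2 : 1 + (b * Real.cos t / (s * Real.sin t)) ^ 2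
          = (Real.sin t ^ 2 + b ^ 2) / (s * Real.sin t) ^ 2 := by
        field_simp
        nlinarith [hs_sq, hpyth]
      rw [e1, e2]
      field_simp
      linear_combination (b * Real.sin t ^ 2 - b * Real.sin t ^ 2 * s ^ 2
          + b ^ 3 - b ^ 3 * s ^ 2) * hpyth
        + ((b ^ 2 * Real.sin t ^ 4 + b ^ 4 * Real.sin t ^ 2) * (1 + b ^ 2)
          + (-b ^ 4 * Real.sin t ^ 4 - b ^ 6 * Real.sin t ^ 2 - b * Real.sin t ^ 2
            - b ^ 2 * Real.sin t ^ 4 - b ^ 3 - b ^ 4 * Real.sin t ^ 2)) * hs_sq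
    rw [harct]
    linear_combination (-1 : ℝ) * hzero
  -- integrability
  have hint : IntervalIntegrable (fun t => Real.arctan (b / Real.sin t) * Real.sin t)
      MeasureTheory.volume 0 π := by
    rw [intervalIntegrable_iff_integrableOn_Ioc_of_le Real.pi_pos.le]
    apply Measure.integrableOn_of_bounded (M := π / 2)
    · exact ((measure_Ioc_lt_top).ne)
    · apply Measurable.aestronglyMeasurable
      exact ((Real.continuous_arctan.measurable.comp
        (measurable_const.div Real.continuous_sin.measurable)).mul
        Real.continuous_sin.measurable)
    · filter_upwards with t
      rw [Real.norm_eq_abs, abs_mul]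
      have h1 : |Real.arctan (b / Real.sin t)| ≤ π / 2 := by
        rw [abs_le]
        constructor
        · linarith [Real.neg_pi_div_two_lt_arctan (b / Real.sin t)]
        · linarith [Real.arctan_lt_pi_div_two (b / Real.sin t)]
      have h2 : |Real.sin t| ≤ 1 := Real.abs_sin_le_one t
      calc |Real.arctan (b / Real.sin t)| * |Real.sin t| ≤ π / 2 * 1 :=
            mul_le_mul h1 h2 (abs_nonneg _) (by positivity)
        _ = π / 2 := mul_one _
  -- apply FTC
  have key : ∫ t in (0:ℝ)..π, Real.arctan (b / Real.sin t) * Real.sin t = G π - G 0 :=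
    intervalIntegral.integral_eq_sub_of_hasDeriv_right_of_le Real.pi_pos.le
      hGcont.continuousOn
      (fun t ht => (hGderiv t ht).hasDerivWithinAt)
      hint
  have hIoo : (∫ t in Set.Ioo (0:ℝ) π, Real.arctan (b / Real.sin t) * Real.sin t)
      = ∫ t in (0:ℝ)..π, Real.arctan (b / Real.sin t) * Real.sin t := by
    rw [intervalIntegral.integral_of_le Real.pi_pos.le, MeasureTheory.integral_Ioc_eq_integral_Ioo]
  rw [hIoo, key]
  -- compute endpoint values
  have hb2 : Real.sqrt (b ^ 2) = b := Real.sqrt_sq hb.le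
  have hG0 : G 0 = -(π / 2) + s * (π / 2) := by
    simp only [hG_def, Real.cos_zero, Real.sin_zero]
    norm_num [hb2, div_self hb.ne', Real.arcsin_one]
  have hGπ : G π = π / 2 + s * -(π / 2) + b * π := by
    simp only [hG_def, Real.cos_pi, Real.sin_pi]
    norm_num [hb2]
    rw [show (-b / b : ℝ) = -1 by field_simp, Real.arcsin_neg_one]
    ring
  rw [hG0, hGπ]
  ring
end

section
/- For every k > 0, ∫₀¹ arctan( k / √(u(1 − u)) ) du = (π/2) · (1 + 2k − √(4k² + 1)). In particular, for 0 < l < 1 and k = √l/(1 − l), this integral equals π√l / (1 + √l). -/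
open Real Set MeasureTheory Filter Topology

noncomputable def sfn (u : ℝ) : ℝ := Real.sqrt (u / (1 - u))

noncomputable def Gfn (k c u : ℝ) : ℝ :=
  (u - k/c) * Real.arctan (c * sfn u) + (k/c - (1-u)) * Real.arctan (c / sfn u)
    + k * (2 * Real.arctan (sfn u) - Real.pi/2)

noncomputable def Ffn (k c u : ℝ) : ℝ :=
  if u ≤ 0 then -((Real.pi/2)*(1+k-k/c))
  else if 1 ≤ u then (Real.pi/2)*(1+k-k/c)
  else Gfn k c u

lemma sfn_pos {x : ℝ} (hx : x ∈ Set.Ioo (0:ℝ) 1) : 0 < sfn x :=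
  Real.sqrt_pos.mpr (div_pos hx.1 (by linarith [hx.2]))

lemma sfn_sq {x : ℝ} (hx : x ∈ Set.Ioo (0:ℝ) 1) : (sfn x)^2 = x / (1 - x) :=
  Real.sq_sqrt (le_of_lt (div_pos hx.1 (by linarith [hx.2])))

lemma sfn_contAt {x : ℝ} (hx : x < 1) : ContinuousAt sfn x := by
  apply Real.continuous_sqrt.continuousAt.comp
  exact ContinuousAt.div continuousAt_id (continuousAt_const.sub continuousAt_id)
    (by intro h; linarith)

lemma Ffn_eq_Gfn {k c : ℝ} {u : ℝ} (hu : u ∈ Set.Ioo (0:ℝ) 1) : Ffn k c u = Gfn k c u := by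
  obtain ⟨h0, h1⟩ := hu
  simp only [Ffn, if_neg (by linarith : ¬ u ≤ 0), if_neg (by linarith : ¬ (1:ℝ) ≤ u)]

lemma Ffn_eventually_eq {k c : ℝ} {x : ℝ} (hx : x ∈ Set.Ioo (0:ℝ) 1) :
    Ffn k c =ᶠ[nhds x] Gfn k c := by
  filter_upwards [isOpen_Ioo.mem_nhds hx] with u hu
  exact Ffn_eq_Gfn hu

lemma Gfn_contAt (k c : ℝ) (hc : 0 < c) {x : ℝ} (hx : x ∈ Set.Ioo (0:ℝ) 1) :
    ContinuousAt (Gfn k c) x := by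
  have hs := sfn_contAt hx.2
  have hsne : sfn x ≠ 0 := (sfn_pos hx).ne'
  have h1 : ContinuousAt (fun u => Real.arctan (c * sfn u)) x :=
    Real.continuous_arctan.continuousAt.comp (hs.const_mul c)
  have h2 : ContinuousAt (fun u => Real.arctan (c / sfn u)) x :=
    Real.continuous_arctan.continuousAt.comp (continuousAt_const.div hs hsne)
  have h3 : ContinuousAt (fun u => Real.arctan (sfn u)) x :=
    Real.continuous_arctan.continuousAt.comp hs
  exact (((continuousAt_id.sub continuousAt_const).mul h1).add
    ((continuousAt_const.sub (continuousAt_const.sub continuousAt_id)).mul h2)).add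
    (continuousAt_const.mul ((h3.const_mul 2).sub continuousAt_const))

lemma tendsto_sqrt_atTop' : Tendsto Real.sqrt atTop atTop := by
  apply tendsto_atTop_atTop.mpr
  intro b
  refine ⟨b^2, fun a ha => ?_⟩
  calc b ≤ |b| := le_abs_self b
  _ = Real.sqrt (b^2) := (Real.sqrt_sq_eq_abs b).symm
  _ ≤ Real.sqrt a := Real.sqrt_le_sqrt ha

lemma arctan_tendsto_top : Tendsto Real.arctan atTop (nhds (Real.pi/2)) :=
  tendsto_nhds_of_tendsto_nhdsWithin Real.tendsto_arctan_atTop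

lemma sfn_tendsto_zero : Tendsto sfn (nhdsWithin 0 (Set.Ioi 0)) (nhdsWithin 0 (Set.Ioi 0)) := by
  rw [tendsto_nhdsWithin_iff]
  constructor
  · have hca : ContinuousAt sfn 0 := sfn_contAt (by norm_num)
    have h0 : sfn 0 = 0 := by simp [sfn]
    have := hca.tendsto
    rw [h0] at this
    exact this.mono_left nhdsWithin_le_nhds
  · filter_upwards [Ioo_mem_nhdsGT (by norm_num : (0:ℝ) < 1)] with u hu
    exact sfn_pos hu

lemma sfn_tendsto_one : Tendsto sfn (nhdsWithin 1 (Set.Iio 1)) atTop := by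
  apply tendsto_sqrt_atTop'.comp
  have h1 : Tendsto (fun u : ℝ => 1 - u) (nhdsWithin 1 (Set.Iio 1)) (nhdsWithin 0 (Set.Ioi 0)) := by
    rw [tendsto_nhdsWithin_iff]
    constructor
    · have h : Tendsto (fun u : ℝ => 1 - u) (nhds 1) (nhds (1-1)) :=
        tendsto_const_nhds.sub tendsto_id
      rw [show (1:ℝ)-1 = 0 by norm_num] at h
      exact h.mono_left nhdsWithin_le_nhds
    · filter_upwards [self_mem_nhdsWithin] with u hu
      simpa using hu
  have hinv : Tendsto (fun u : ℝ => (1 - u)⁻¹) (nhdsWithin 1 (Set.Iio 1)) atTop :=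
    h1.inv_tendsto_nhdsGT_zero
  have hu : Tendsto (fun u : ℝ => u) (nhdsWithin 1 (Set.Iio 1)) (nhds 1) :=
    tendsto_id.mono_left nhdsWithin_le_nhds
  simpa [div_eq_mul_inv] using hu.pos_mul_atTop one_pos hinv

section aux
variable {k c : ℝ} (hk : 0 < k) (hc : 0 < c) (hc1 : c < 1) (hrel : k * (1 - c^2) = c)

set_option linter.unusedSectionVars false

lemma sfn_hasDerivAt {x : ℝ} (hx : x ∈ Set.Ioo (0:ℝ) 1) :
    HasDerivAt sfn (1 / (2 * sfn x) * (1/(1-x)^2)) x := by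
  obtain ⟨h0, h1⟩ := hx
  have hne : (1:ℝ) - x ≠ 0 := by linarith
  have hg : HasDerivAt (fun u : ℝ => u / (1 - u)) (1/(1-x)^2) x := by
    have := (hasDerivAt_id x).div ((hasDerivAt_id x).const_sub 1) hne
    refine this.congr_deriv ?_
    simp only [id]; ring
  have hpos : 0 < x / (1 - x) := div_pos h0 (by linarith)
  exact (Real.hasDerivAt_sqrt hpos.ne').comp x hg

include hk hc hc1 hrel in
lemma Gfn_deriv {x : ℝ} (hx : x ∈ Set.Ioo (0:ℝ) 1) :
    HasDerivAt (Gfn k c)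
      (Real.arctan (c * sfn x) + Real.arctan (c / sfn x)) x := by
  obtain ⟨h0, h1⟩ := hx
  have hne : (1:ℝ) - x ≠ 0 := by intro h; linarith
  have hσpos : 0 < sfn x := sfn_pos ⟨h0, h1⟩
  have hσ2 : (sfn x)^2 = x/(1-x) := sfn_sq ⟨h0, h1⟩
  have hs : HasDerivAt sfn (1/(2*sfn x)*(1/(1-x)^2)) x := sfn_hasDerivAt ⟨h0, h1⟩
  have h1d : HasDerivAt (fun u => Real.arctan (c * sfn u))
      (1/(1+(c*sfn x)^2) * (c * (1/(2*sfn x)*(1/(1-x)^2)))) x :=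
    by have := (Real.hasDerivAt_arctan (c * sfn x)).comp x (hs.const_mul c); exact this
  have h2d : HasDerivAt (fun u => c / sfn u)
      ((0 * sfn x - c * (1/(2*sfn x)*(1/(1-x)^2)))/(sfn x)^2) x :=
    (hasDerivAt_const x c).div hs hσpos.ne'
  have h2a : HasDerivAt (fun u => Real.arctan (c / sfn u))
      (1/(1+(c/sfn x)^2) * ((0 * sfn x - c*(1/(2*sfn x)*(1/(1-x)^2)))/(sfn x)^2)) x :=
    (Real.hasDerivAt_arctan _).comp x h2d
  have h3 : HasDerivAt (fun u => Real.arctan (sfn u))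
      (1/(1+(sfn x)^2) * (1/(2*sfn x)*(1/(1-x)^2))) x :=
    (Real.hasDerivAt_arctan _).comp x hs
  have total := ((((hasDerivAt_id x).sub_const (k/c)).mul h1d).add
    (((hasDerivAt_const x (k/c)).sub ((hasDerivAt_const x 1).sub (hasDerivAt_id x))).mul h2a)).add
    ((((h3.const_mul 2).sub_const (Real.pi/2)).const_mul k))
  refine total.congr_deriv ?_
  simp only [id, Pi.sub_apply]
  have hc2 : (1:ℝ) - c^2 ≠ 0 := by nlinarith
  have hkc' : k = c/(1-c^2) := by field_simp; linarith [hrel]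
  generalize hg : sfn x = σ at hσpos hσ2 ⊢
  have h1σ : (1:ℝ) + σ^2 ≠ 0 := by positivity
  have hxσ : x = σ^2/(1+σ^2) := by
    rw [hσ2]
    field_simp
    ring
  rw [hxσ, hkc']
  have hσne : σ ≠ 0 := hσpos.ne'
  field_simp
  ring

include hk hc hc1 hrel in
lemma arctan_split {x : ℝ} (hx : x ∈ Set.Ioo (0:ℝ) 1) :
    Real.arctan (c * sfn x) + Real.arctan (c / sfn x)
      = Real.arctan (k / Real.sqrt (x * (1 - x))) := by
  obtain ⟨h0, h1⟩ := hx
  have hσ : 0 < sfn x := sfn_pos ⟨h0, h1⟩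
  have hlt : (c * sfn x) * (c / sfn x) < 1 := by
    rw [show (c * sfn x) * (c / sfn x) = c^2 by field_simp]
    nlinarith
  rw [Real.arctan_add hlt]
  congr 1
  have ha : 0 < Real.sqrt x := Real.sqrt_pos.mpr h0
  have hb : 0 < Real.sqrt (1-x) := Real.sqrt_pos.mpr (by linarith)
  have hab : Real.sqrt (x * (1-x)) = Real.sqrt x * Real.sqrt (1-x) := Real.sqrt_mul h0.le _
  have hσab : sfn x = Real.sqrt x / Real.sqrt (1-x) := Real.sqrt_div h0.le _
  have ha2 : (Real.sqrt x)^2 = x := Real.sq_sqrt h0.le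
  have hb2 : (Real.sqrt (1-x))^2 = 1-x := Real.sq_sqrt (by linarith)
  rw [hab, hσab]
  set a := Real.sqrt x
  set b := Real.sqrt (1-x)
  have h2 : a^2 + b^2 = 1 := by nlinarith
  have hcc : (1:ℝ) - c^2 ≠ 0 := by nlinarith
  have e1 : c * (a/b) + c / (a/b) = c / (a*b) := by
    field_simp
    linear_combination h2
  have e2 : (c*(a/b)) * (c/(a/b)) = c^2 := by field_simp
  rw [e1, e2, div_div]
  rw [div_eq_div_iff (by positivity) (by positivity)]
  linear_combination (-a*b) * hrel

include hk hc in
lemma Gfn_tendsto_zero :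
    Tendsto (Gfn k c) (nhdsWithin 0 (Set.Ioi 0)) (nhds (-((Real.pi/2)*(1+k-k/c)))) := by
  have hs0 : Tendsto sfn (nhdsWithin 0 (Set.Ioi 0)) (nhds 0) :=
    tendsto_nhds_of_tendsto_nhdsWithin sfn_tendsto_zero
  have hA : Tendsto (fun u => Real.arctan (c * sfn u)) (nhdsWithin 0 (Set.Ioi 0)) (nhds 0) := by
    have : Tendsto (fun u => c * sfn u) (nhdsWithin 0 (Set.Ioi 0)) (nhds 0) := by
      simpa using hs0.const_mul c
    simpa [Function.comp_def] using (Real.continuous_arctan.tendsto 0).comp this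
  have hB : Tendsto (fun u => Real.arctan (c / sfn u)) (nhdsWithin 0 (Set.Ioi 0))
      (nhds (Real.pi/2)) := by
    have hdiv : Tendsto (fun u => c / sfn u) (nhdsWithin 0 (Set.Ioi 0)) atTop := by
      have := sfn_tendsto_zero.inv_tendsto_nhdsGT_zero
      simpa [div_eq_mul_inv] using this.const_mul_atTop hc
    exact arctan_tendsto_top.comp hdiv
  have hC : Tendsto (fun u => Real.arctan (sfn u)) (nhdsWithin 0 (Set.Ioi 0)) (nhds 0) := by
    simpa [Function.comp_def] using (Real.continuous_arctan.tendsto 0).comp hs0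
  have hid : Tendsto (fun u : ℝ => u) (nhdsWithin 0 (Set.Ioi 0)) (nhds 0) :=
    tendsto_id.mono_left nhdsWithin_le_nhds
  have hsum := (((hid.sub_const (k/c)).mul hA).add
      (((tendsto_const_nhds (x := k/c)).sub ((tendsto_const_nhds (x := (1:ℝ))).sub hid)).mul hB)).add
      (((hC.const_mul 2).sub_const (Real.pi/2)).const_mul k)
  have heq : Gfn k c = fun u => (u - k/c) * Real.arctan (c * sfn u)
      + (k/c - (1-u)) * Real.arctan (c / sfn u)
      + k * (2 * Real.arctan (sfn u) - Real.pi/2) := rfl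
  rw [heq]
  convert hsum using 2
  ring

include hk hc in
lemma Gfn_tendsto_one :
    Tendsto (Gfn k c) (nhdsWithin 1 (Set.Iio 1)) (nhds ((Real.pi/2)*(1+k-k/c))) := by
  have hs1 : Tendsto sfn (nhdsWithin 1 (Set.Iio 1)) atTop := sfn_tendsto_one
  have hA : Tendsto (fun u => Real.arctan (c * sfn u)) (nhdsWithin 1 (Set.Iio 1))
      (nhds (Real.pi/2)) := by
    have : Tendsto (fun u => c * sfn u) (nhdsWithin 1 (Set.Iio 1)) atTop :=
      hs1.const_mul_atTop hc
    exact arctan_tendsto_top.comp this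
  have hB : Tendsto (fun u => Real.arctan (c / sfn u)) (nhdsWithin 1 (Set.Iio 1)) (nhds 0) := by
    have hdiv : Tendsto (fun u => c / sfn u) (nhdsWithin 1 (Set.Iio 1)) (nhds 0) := by
      have := hs1.inv_tendsto_atTop
      have h2 := this.const_mul c
      simpa [div_eq_mul_inv] using h2
    simpa [Function.comp_def] using (Real.continuous_arctan.tendsto 0).comp hdiv
  have hC : Tendsto (fun u => Real.arctan (sfn u)) (nhdsWithin 1 (Set.Iio 1))
      (nhds (Real.pi/2)) := arctan_tendsto_top.comp hs1
  have hid : Tendsto (fun u : ℝ => u) (nhdsWithin 1 (Set.Iio 1)) (nhds 1) :=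
    tendsto_id.mono_left nhdsWithin_le_nhds
  have hsum := (((hid.sub_const (k/c)).mul hA).add
      (((tendsto_const_nhds (x := k/c)).sub ((tendsto_const_nhds (x := (1:ℝ))).sub hid)).mul hB)).add
      (((hC.const_mul 2).sub_const (Real.pi/2)).const_mul k)
  have heq : Gfn k c = fun u => (u - k/c) * Real.arctan (c * sfn u)
      + (k/c - (1-u)) * Real.arctan (c / sfn u)
      + k * (2 * Real.arctan (sfn u) - Real.pi/2) := rfl
  rw [heq]
  convert hsum using 2
  ring

include hk hc in
lemma Ffn_contOn : ContinuousOn (Ffn k c) (Set.Icc 0 1) := by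
  intro x hx
  rcases eq_or_lt_of_le hx.1 with h0 | h0
  · -- x = 0
    have hx0 : x = 0 := h0.symm
    subst hx0
    have hF0 : Ffn k c 0 = -((Real.pi/2)*(1+k-k/c)) := by simp [Ffn]
    apply ContinuousWithinAt.mono (t := insert 0 (Set.Ioi (0:ℝ)))
    · unfold ContinuousWithinAt
      rw [nhdsWithin_insert, hF0]
      rw [tendsto_sup]
      constructor
      · rw [hF0.symm]; exact tendsto_pure_nhds (Ffn k c) 0
      · apply Tendsto.congr' _ (Gfn_tendsto_zero hk hc)
        filter_upwards [Ioo_mem_nhdsGT (by norm_num : (0:ℝ) < 1)] with u hu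
        exact (Ffn_eq_Gfn hu).symm
    · intro u hu
      rcases eq_or_lt_of_le hu.1 with h | h
      · exact Or.inl h.symm
      · exact Or.inr h
  rcases eq_or_lt_of_le hx.2 with h1 | h1
  · -- x = 1
    subst h1
    have hF1 : Ffn k c 1 = (Real.pi/2)*(1+k-k/c) := by norm_num [Ffn]
    apply ContinuousWithinAt.mono (t := insert 1 (Set.Iio (1:ℝ)))
    · unfold ContinuousWithinAt
      rw [nhdsWithin_insert, hF1]
      rw [tendsto_sup]
      constructor
      · rw [hF1.symm]; exact tendsto_pure_nhds (Ffn k c) 1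
      · apply Tendsto.congr' _ (Gfn_tendsto_one hk hc)
        filter_upwards [Ioo_mem_nhdsLT (by norm_num : (0:ℝ) < 1)] with u hu
        exact (Ffn_eq_Gfn hu).symm
    · intro u hu
      rcases eq_or_lt_of_le hu.2 with h | h
      · exact Or.inl h
      · exact Or.inr h
  · exact (((Gfn_contAt k c hc ⟨h0, h1⟩).congr (Ffn_eventually_eq ⟨h0, h1⟩).symm)).continuousWithinAt

end aux

lemma integrand_intervalIntegrable (k : ℝ) :
    IntervalIntegrable (fun u => Real.arctan (k / Real.sqrt (u * (1 - u))))
      MeasureTheory.volume 0 1 := by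
  rw [intervalIntegrable_iff_integrableOn_Ioc_of_le zero_le_one]
  apply MeasureTheory.Measure.integrableOn_of_bounded (M := Real.pi/2)
  · simp
  · apply Measurable.aestronglyMeasurable
    apply Real.continuous_arctan.measurable.comp
    exact measurable_const.div ((measurable_id.mul (measurable_const.sub measurable_id)).sqrt)
  · filter_upwards with u
    rw [Real.norm_eq_abs, abs_le]
    exact ⟨(Real.neg_pi_div_two_lt_arctan _).le, (Real.arctan_lt_pi_div_two _).le⟩

lemma main_integral (k : ℝ) (hk : 0 < k) :
    ∫ u in Set.Ioo (0:ℝ) 1, Real.arctan (k / Real.sqrt (u * (1 - u)))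
      = (Real.pi / 2) * (1 + 2*k - Real.sqrt (4*k^2 + 1)) := by
  set D := Real.sqrt (4*k^2 + 1) with hDdef
  have hD2 : D^2 = 4*k^2+1 := Real.sq_sqrt (by positivity)
  have hD0 : 0 ≤ D := Real.sqrt_nonneg _
  have hD1 : 1 < D := by nlinarith
  set c := (D - 1)/(2*k) with hcdef
  have hc : 0 < c := div_pos (by linarith) (by linarith)
  have hc1 : c < 1 := by
    rw [hcdef, div_lt_one (by linarith)]
    nlinarith
  have hrel : k * (1 - c^2) = c := by
    rw [hcdef]
    field_simp
    ring_nf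
    nlinarith [hD2]
  have hderiv : ∀ x ∈ Set.Ioo (0:ℝ) 1,
      HasDerivAt (Ffn k c) (Real.arctan (k / Real.sqrt (x * (1 - x)))) x := by
    intro x hx
    have := (Gfn_deriv hk hc hc1 hrel hx).congr_of_eventuallyEq (Ffn_eventually_eq hx)
    rwa [arctan_split hk hc hc1 hrel hx] at this
  have hFTC := intervalIntegral.integral_eq_sub_of_hasDerivAt_of_le zero_le_one
    (Ffn_contOn hk hc) hderiv (integrand_intervalIntegrable k)
  have hIoo : ∫ u in Set.Ioo (0:ℝ) 1, Real.arctan (k / Real.sqrt (u * (1 - u)))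
      = ∫ u in (0:ℝ)..1, Real.arctan (k / Real.sqrt (u * (1 - u))) := by
    rw [intervalIntegral.integral_of_le zero_le_one, MeasureTheory.integral_Ioc_eq_integral_Ioo]
  rw [hIoo, hFTC]
  have hF0 : Ffn k c 0 = -((Real.pi/2)*(1+k-k/c)) := by simp [Ffn]
  have hF1 : Ffn k c 1 = (Real.pi/2)*(1+k-k/c) := by norm_num [Ffn]
  rw [hF0, hF1]
  have hkc : k/c = (D+1)/2 := by
    rw [hcdef, div_div_eq_mul_div, div_eq_div_iff (by linarith) (by norm_num)]
    linear_combination (-1:ℝ) * hD2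
  rw [hkc]
  ring

theorem integral_arctan_sqrt_u_one_sub_u :
    (∀ k : ℝ, 0 < k →
      ∫ u in Set.Ioo (0:ℝ) 1, Real.arctan (k / Real.sqrt (u * (1 - u)))
        = (π / 2) * (1 + 2*k - Real.sqrt (4*k^2 + 1))) ∧
    (∀ l : ℝ, 0 < l → l < 1 →
      ∫ u in Set.Ioo (0:ℝ) 1,
          Real.arctan ((Real.sqrt l / (1 - l)) / Real.sqrt (u * (1 - u)))
        = π * Real.sqrt l / (1 + Real.sqrt l)) := by
  constructor
  · exact fun k hk => main_integral k hk
  · intro l hl0 hl1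
    have hm : 0 < Real.sqrt l := Real.sqrt_pos.mpr hl0
    have hm1 : Real.sqrt l < 1 := by
      nlinarith [Real.sq_sqrt hl0.le, Real.sqrt_nonneg l]
    have hk : 0 < Real.sqrt l / (1 - l) := div_pos hm (by linarith)
    rw [main_integral _ hk]
    set m := Real.sqrt l with hmdef
    have hl : l = m^2 := (Real.sq_sqrt hl0.le).symm
    have hD : Real.sqrt (4*(m/(1-l))^2 + 1) = (1+l)/(1-l) := by
      rw [hl]
      rw [show 4*(m/(1-m^2))^2 + 1 = ((1+m^2)/(1-m^2))^2 by
        have : (1:ℝ) - m^2 ≠ 0 := by nlinarith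
        field_simp
        ring]
      exact Real.sqrt_sq (div_nonneg (by positivity) (by nlinarith))
    rw [hD]
    have h1 : (1:ℝ) - l ≠ 0 := by linarith
    have h2 : (1:ℝ) + m ≠ 0 := by positivity
    rw [hl] at h1 ⊢
    field_simp
    ring
end

section
/- For every l ∈ (0, 1), ∫₀^{1−l} ( √( l / (x(1 − l − x)) ) − arctan( √( l / (x(1 − l − x)) ) ) ) dx = π l. (Equivalently, the length L₁ of the segment of the concave majorant of a standard Brownian bridge covering an independent uniform point has density f_{L₁}(l) = 1 on (0,1), i.e. L₁ is uniformly distributed.) -/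
open Real Set MeasureTheory Filter Topology intervalIntegral

noncomputable def Gfun (l x : ℝ) : ℝ :=
  ((1 - l)/2 - x) * Real.arctan (Real.sqrt l / Real.sqrt (x * (1 - l - x)))
  - (1 + l)/2 * Real.arctan (Real.sqrt l * (1 - l - 2*x) / ((1 + l) * Real.sqrt (x * (1 - l - x))))

noncomputable def Ffun (l x : ℝ) : ℝ :=
  if x ≤ 0 then -(π * l)/2 else if 1 - l ≤ x then (π * l)/2 else Gfun l x

lemma alg1 (A s m : ℝ) (hs : s ≠ 0) :
    1/(1 + (m/s)^2) * ((0 * s - m * (A/(2*s))) / s^2)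
      = -(m*A)/(2*s*(s^2+m^2)) := by
  have h1 : (0:ℝ) < s^2 := by positivity
  have h2 : s^2 + m^2 ≠ 0 := by positivity
  have h3 : (1:ℝ) + (m/s)^2 ≠ 0 := by positivity
  field_simp
  ring

lemma alg2 (A s m c : ℝ) (hs : s ≠ 0) (hc : c ≠ 0) :
    1/(1 + (m*A/(c*s))^2) * ((m*(0-2*1)*(c*s) - m*A*(c*(A/(2*s)))) / (c*s)^2)
      = -(m*(4*s^2+A^2)*c)/(2*s*(c^2*s^2+m^2*A^2)) := by
  have h1 : (0:ℝ) < s^2 := by positivity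
  have h2 : c^2*s^2 + m^2*A^2 ≠ 0 := by positivity
  have h3 : (1:ℝ) + (m*A/(c*s))^2 ≠ 0 := by positivity
  field_simp
  ring

lemma alg3 (x l s m : ℝ) (hl : 0 < l) (hs : 0 < s) (hu : 0 < x*(1-l-x))
    (hs2 : s^2 = x*(1-l-x)) (hm2 : m^2 = l) :
    m/s - Real.arctan (m/s)
    = ((0-1) * Real.arctan (m/s) + ((1-l)/2 - x) * (-(m*(1-l-2*x))/(2*s*(s^2+m^2))))
      - (1+l)/2 * (-(m*(4*s^2+(1-l-2*x)^2)*(1+l))/(2*s*((1+l)^2*s^2+m^2*(1-l-2*x)^2))) := by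
  have e1 : s^2 + m^2 = x*(1-l-x) + l := by rw [hs2, hm2]
  have e2 : (1+l)^2*s^2 + m^2*(1-l-2*x)^2 = (1+l)^2*(x*(1-l-x)) + l*(1-l-2*x)^2 := by
    rw [hs2, hm2]
  have e3 : 4*s^2 + (1-l-2*x)^2 = (1-l)^2 + 4*(s^2 - x*(1-l-x)) := by ring
  have e3' : 4*s^2 + (1-l-2*x)^2 = (1-l)^2 := by rw [e3, hs2]; ring
  rw [e1, e2, e3']
  have d1 : x*(1-l-x) + l ≠ 0 := by positivity
  have d2 : (1+l)^2*(x*(1-l-x)) + l*(1-l-2*x)^2 ≠ 0 := by positivity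
  have h1l : (1:ℝ)+l ≠ 0 := by positivity
  field_simp
  ring

theorem deriv_G (l : ℝ) (hl : 0 < l) (hl1 : l < 1) {x : ℝ} (hx : x ∈ Set.Ioo (0:ℝ) (1-l)) :
    HasDerivAt (Gfun l)
      (Real.sqrt (l / (x * (1 - l - x))) - Real.arctan (Real.sqrt (l / (x * (1 - l - x))))) x := by
  obtain ⟨hx0, hxa⟩ := hx
  have hu : 0 < x * (1 - l - x) := mul_pos hx0 (by linarith)
  have hs : 0 < Real.sqrt (x * (1 - l - x)) := Real.sqrt_pos.2 hu
  have hs2 : Real.sqrt (x * (1 - l - x)) ^ 2 = x * (1 - l - x) := Real.sq_sqrt hu.le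
  have hm2 : Real.sqrt l ^ 2 = l := Real.sq_sqrt hl.le
  have h1l : (0:ℝ) < 1 + l := by linarith
  have hu' : HasDerivAt (fun y : ℝ => y * (1 - l - y)) (1 - l - 2*x) x := by
    have h := (hasDerivAt_id x).mul ((hasDerivAt_const x (1-l)).sub (hasDerivAt_id x))
    convert h using 1
    · rfl
    · rfl
    show (1 - l - 2*x : ℝ) = 1 * ((1 - l) - x) + x * (0 - 1)
    ring
    rfl
  have hsq : HasDerivAt (fun y : ℝ => Real.sqrt (y * (1 - l - y)))
      ((1 - l - 2*x)/(2*Real.sqrt (x * (1 - l - x)))) x := hu'.sqrt hu.ne'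
  have harcp : HasDerivAt (fun y : ℝ => Real.arctan (Real.sqrt l / Real.sqrt (y * (1 - l - y))))
      (-(Real.sqrt l*(1-l-2*x))/(2*Real.sqrt (x * (1 - l - x))*(Real.sqrt (x * (1 - l - x))^2+Real.sqrt l^2))) x := by
    have h := ((hasDerivAt_const x (Real.sqrt l)).div hsq hs.ne').arctan
    convert h using 1
    · rfl
    exact (alg1 (1-l-2*x) _ _ hs.ne').symm
  have hnum : HasDerivAt (fun y : ℝ => Real.sqrt l * (1 - l - 2*y)) (Real.sqrt l * (0-2*1)) x :=
    ((hasDerivAt_const x (1-l)).sub ((hasDerivAt_id x).const_mul 2)).const_mul (Real.sqrt l)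
  have hden : HasDerivAt (fun y : ℝ => (1+l) * Real.sqrt (y * (1 - l - y)))
      ((1+l) * ((1 - l - 2*x)/(2*Real.sqrt (x * (1 - l - x))))) x := hsq.const_mul (1+l)
  have hdenne : (1+l) * Real.sqrt (x * (1 - l - x)) ≠ 0 := by positivity
  have harcq : HasDerivAt
      (fun y : ℝ => Real.arctan (Real.sqrt l * (1 - l - 2*y) / ((1+l) * Real.sqrt (y * (1 - l - y)))))
      (-(Real.sqrt l*(4*Real.sqrt (x * (1 - l - x))^2+(1-l-2*x)^2)*(1+l))
        /(2*Real.sqrt (x * (1 - l - x))*((1+l)^2*Real.sqrt (x * (1 - l - x))^2+Real.sqrt l^2*(1-l-2*x)^2))) x := by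
    have h := (hnum.div hden hdenne).arctan
    convert h using 1
    · rfl
    exact (alg2 (1-l-2*x) _ _ _ hs.ne' h1l.ne').symm
  have h1 := ((hasDerivAt_const x ((1-l)/2)).sub (hasDerivAt_id x)).mul harcp
  have h2 := harcq.const_mul ((1+l)/2)
  have htot := h1.sub h2
  refine HasDerivAt.congr_deriv (f := Gfun l) htot ?_
  rw [Real.sqrt_div hl.le]
  exact (alg3 x l _ _ hl hs hu hs2 hm2).symm

theorem tst : True := trivial

lemma arctan_nonneg {t : ℝ} (ht : 0 ≤ t) : 0 ≤ Real.arctan t := by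
  have := Real.arctan_strictMono.monotone ht
  rwa [Real.arctan_zero] at this

lemma arctan_le_self' {t : ℝ} (ht : 0 ≤ t) : Real.arctan t ≤ t := by
  rcases eq_or_lt_of_le ht with h | h
  · simp [← h]
  rcases lt_or_ge t (π/2) with h2 | h2
  · have h3 : t < Real.tan t := Real.lt_tan h h2
    have h4 : Real.arctan t < Real.arctan (Real.tan t) := Real.arctan_strictMono h3
    rw [Real.arctan_tan (by linarith [Real.pi_pos]) h2] at h4
    exact h4.le
  · exact le_of_lt ((Real.arctan_lt_pi_div_two t).trans_le h2)

lemma cont_G (l : ℝ) (hl : 0 < l) (hl1 : l < 1) {x : ℝ} (hx : x ∈ Set.Ioo (0:ℝ) (1-l)) :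
    ContinuousAt (Gfun l) x := by
  obtain ⟨hx0, hxa⟩ := hx
  have hu : 0 < x * (1 - l - x) := mul_pos hx0 (by linarith)
  have hs : 0 < Real.sqrt (x * (1 - l - x)) := Real.sqrt_pos.2 hu
  have hcsq : ContinuousAt (fun y : ℝ => Real.sqrt (y * (1 - l - y))) x :=
    (Real.continuous_sqrt.comp (continuous_id.mul (continuous_const.sub continuous_id))).continuousAt
  have h1 : ContinuousAt (fun y : ℝ => Real.arctan (Real.sqrt l / Real.sqrt (y * (1 - l - y)))) x :=
    Real.continuous_arctan.continuousAt.comp (continuousAt_const.div hcsq hs.ne')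
  have h2 : ContinuousAt (fun y : ℝ =>
      Real.arctan (Real.sqrt l * (1 - l - 2*y) / ((1+l) * Real.sqrt (y * (1 - l - y))))) x := by
    refine Real.continuous_arctan.continuousAt.comp (ContinuousAt.div ?_ ?_ ?_)
    · exact continuousAt_const.mul ((continuousAt_const.sub (continuousAt_id.const_mul 2)))
    · exact continuousAt_const.mul hcsq
    · positivity
  exact ((continuousAt_const.sub continuousAt_id).mul h1).sub (continuousAt_const.mul h2)

lemma sqrt_u_tendsto (l : ℝ) (hl : 0 < l) (hl1 : l < 1) {c : ℝ} {L : Filter ℝ}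
    (hL1 : Tendsto (fun x : ℝ => x) L (𝓝 c)) (hc : c * (1 - l - c) = 0)
    (hL2 : ∀ᶠ x in L, x ∈ Set.Ioo (0:ℝ) (1-l)) :
    Tendsto (fun x : ℝ => Real.sqrt (x*(1-l-x))) L (𝓝[>] (0:ℝ)) := by
  rw [tendsto_nhdsWithin_iff]
  constructor
  · have hcont : Continuous (fun x : ℝ => Real.sqrt (x*(1-l-x))) :=
      Real.continuous_sqrt.comp (continuous_id.mul (continuous_const.sub continuous_id))
    have := (hcont.tendsto c).comp hL1
    simpa [hc, Function.comp_def] using this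
  · filter_upwards [hL2] with x hx
    exact Real.sqrt_pos.2 (mul_pos hx.1 (by linarith [hx.2]))

lemma G_tendsto_left (l : ℝ) (hl : 0 < l) (hl1 : l < 1) :
    Tendsto (Gfun l) (𝓝[Set.Ioc 0 (1-l)] 0) (𝓝 (-(π * l)/2)) := by
  set L := 𝓝[Set.Ioc (0:ℝ) (1-l)] 0 with hLdef
  have hmem : ∀ᶠ x in L, x ∈ Set.Ioo (0:ℝ) (1-l) := by
    have h1 : ∀ᶠ x in L, x ∈ Set.Ioc (0:ℝ) (1-l) := eventually_mem_nhdsWithin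
    have h2 : ∀ᶠ x in L, x < 1 - l :=
      eventually_nhdsWithin_of_eventually_nhds (eventually_lt_nhds (by linarith))
    filter_upwards [h1, h2] with x hx hx2 using ⟨hx.1, hx2⟩
  have hid : Tendsto (fun x : ℝ => x) L (𝓝 0) := tendsto_id.mono_right nhdsWithin_le_nhds
  have hsu : Tendsto (fun x : ℝ => Real.sqrt (x*(1-l-x))) L (𝓝[>] (0:ℝ)) :=
    sqrt_u_tendsto l hl hl1 hid (by ring) hmem
  have hinv : Tendsto (fun x : ℝ => (Real.sqrt (x*(1-l-x)))⁻¹) L atTop := hsu.inv_tendsto_nhdsGT_zero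
  have harc1 : Tendsto (fun x : ℝ => Real.arctan (Real.sqrt l / Real.sqrt (x*(1-l-x)))) L
      (𝓝 (π/2)) := by
    have ht : Tendsto (fun x : ℝ => Real.sqrt l / Real.sqrt (x*(1-l-x))) L atTop := by
      have := hinv.const_mul_atTop (Real.sqrt_pos.2 hl)
      simpa [div_eq_mul_inv] using this
    exact (Real.tendsto_arctan_atTop.mono_right nhdsWithin_le_nhds).comp ht
  have harc2 : Tendsto (fun x : ℝ =>
      Real.arctan (Real.sqrt l * (1 - l - 2*x) / ((1+l) * Real.sqrt (x*(1-l-x))))) L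
      (𝓝 (π/2)) := by
    have hC : (0:ℝ) < Real.sqrt l * (1-l) / (1+l) := by
      have := Real.sqrt_pos.2 hl
      apply div_pos (mul_pos this (by linarith)) (by linarith)
    have hf : Tendsto (fun x : ℝ => Real.sqrt l * (1 - l - 2*x) / (1+l)) L
        (𝓝 (Real.sqrt l * (1-l) / (1+l))) := by
      have hcont : Continuous (fun x : ℝ => Real.sqrt l * (1 - l - 2*x) / (1+l)) := by
        fun_prop
      have := (hcont.tendsto 0).comp hid
      simpa [Function.comp_def] using this
    have ht0 := Filter.Tendsto.pos_mul_atTop hC hf hinv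
    have ht : Tendsto (fun x : ℝ =>
        Real.sqrt l * (1 - l - 2*x) / ((1+l) * Real.sqrt (x*(1-l-x)))) L atTop := by
      refine ht0.congr fun x => ?_
      rw [← div_eq_mul_inv, div_div]
    exact (Real.tendsto_arctan_atTop.mono_right nhdsWithin_le_nhds).comp ht
  have hfac : Tendsto (fun x : ℝ => (1-l)/2 - x) L (𝓝 ((1-l)/2 - 0)) :=
    tendsto_const_nhds.sub hid
  have htot := (hfac.mul harc1).sub ((tendsto_const_nhds (x := (1+l)/2)).mul harc2)
  have hval : ((1-l)/2 - 0) * (π/2) - (1+l)/2 * (π/2) = -(π * l)/2 := by ring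
  rw [← hval]
  exact htot

lemma G_tendsto_right (l : ℝ) (hl : 0 < l) (hl1 : l < 1) :
    Tendsto (Gfun l) (𝓝[Set.Ico 0 (1-l)] (1-l)) (𝓝 ((π * l)/2)) := by
  set L := 𝓝[Set.Ico (0:ℝ) (1-l)] (1-l) with hLdef
  have hmem : ∀ᶠ x in L, x ∈ Set.Ioo (0:ℝ) (1-l) := by
    have h1 : ∀ᶠ x in L, x ∈ Set.Ico (0:ℝ) (1-l) := eventually_mem_nhdsWithin
    have h2 : ∀ᶠ x in L, 0 < x :=
      eventually_nhdsWithin_of_eventually_nhds (eventually_gt_nhds (by linarith))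
    filter_upwards [h1, h2] with x hx hx2 using ⟨hx2, hx.2⟩
  have hid : Tendsto (fun x : ℝ => x) L (𝓝 (1-l)) := tendsto_id.mono_right nhdsWithin_le_nhds
  have hsu : Tendsto (fun x : ℝ => Real.sqrt (x*(1-l-x))) L (𝓝[>] (0:ℝ)) :=
    sqrt_u_tendsto l hl hl1 hid (by ring) hmem
  have hinv : Tendsto (fun x : ℝ => (Real.sqrt (x*(1-l-x)))⁻¹) L atTop := hsu.inv_tendsto_nhdsGT_zero
  have harc1 : Tendsto (fun x : ℝ => Real.arctan (Real.sqrt l / Real.sqrt (x*(1-l-x)))) L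
      (𝓝 (π/2)) := by
    have ht : Tendsto (fun x : ℝ => Real.sqrt l / Real.sqrt (x*(1-l-x))) L atTop := by
      have := hinv.const_mul_atTop (Real.sqrt_pos.2 hl)
      simpa [div_eq_mul_inv] using this
    exact (Real.tendsto_arctan_atTop.mono_right nhdsWithin_le_nhds).comp ht
  have harc2 : Tendsto (fun x : ℝ =>
      Real.arctan (Real.sqrt l * (1 - l - 2*x) / ((1+l) * Real.sqrt (x*(1-l-x))))) L
      (𝓝 (-(π/2))) := by
    have hC : Real.sqrt l * (1 - l - 2*(1-l)) / (1+l) < 0 := by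
      apply div_neg_of_neg_of_pos _ (by linarith)
      apply mul_neg_of_pos_of_neg (Real.sqrt_pos.2 hl) (by linarith)
    have hf : Tendsto (fun x : ℝ => Real.sqrt l * (1 - l - 2*x) / (1+l)) L
        (𝓝 (Real.sqrt l * (1 - l - 2*(1-l)) / (1+l))) := by
      have hcont : Continuous (fun x : ℝ => Real.sqrt l * (1 - l - 2*x) / (1+l)) := by
        fun_prop
      exact (hcont.tendsto (1-l)).comp hid
    have ht0 := Filter.Tendsto.neg_mul_atTop hC hf hinv
    have ht : Tendsto (fun x : ℝ =>
        Real.sqrt l * (1 - l - 2*x) / ((1+l) * Real.sqrt (x*(1-l-x)))) L atBot := by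
      refine ht0.congr fun x => ?_
      rw [← div_eq_mul_inv, div_div]
    exact (Real.tendsto_arctan_atBot.mono_right nhdsWithin_le_nhds).comp ht
  have hfac : Tendsto (fun x : ℝ => (1-l)/2 - x) L (𝓝 ((1-l)/2 - (1-l))) :=
    tendsto_const_nhds.sub hid
  have htot := (hfac.mul harc1).sub ((tendsto_const_nhds (x := (1+l)/2)).mul harc2)
  have hval : ((1-l)/2 - (1-l)) * (π/2) - (1+l)/2 * (-(π/2)) = (π * l)/2 := by ring
  rw [← hval]
  exact htot

lemma F_eq_G (l : ℝ) {x : ℝ} (hx : x ∈ Set.Ioo (0:ℝ) (1-l)) : Ffun l x = Gfun l x := by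
  simp [Ffun, not_le.2 hx.1, not_le.2 hx.2]

lemma cont_F (l : ℝ) (hl : 0 < l) (hl1 : l < 1) :
    ContinuousOn (Ffun l) (Set.Icc 0 (1-l)) := by
  have h0a : (0:ℝ) < 1-l := by linarith
  intro x hx
  rcases eq_or_lt_of_le hx.1 with h0 | h0
  · -- x = 0
    subst h0
    rw [← Set.Ioc_insert_left h0a.le]
    rw [continuousWithinAt_insert_self]
    have hF0 : Ffun l 0 = -(π * l)/2 := by simp [Ffun]
    unfold ContinuousWithinAt
    rw [hF0]
    refine (G_tendsto_left l hl hl1).congr' ?_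
    have h1 : ∀ᶠ y in 𝓝[Set.Ioc (0:ℝ) (1-l)] 0, y ∈ Set.Ioc (0:ℝ) (1-l) :=
      eventually_mem_nhdsWithin
    have h2 : ∀ᶠ y in 𝓝[Set.Ioc (0:ℝ) (1-l)] 0, y < 1 - l :=
      eventually_nhdsWithin_of_eventually_nhds (eventually_lt_nhds h0a)
    filter_upwards [h1, h2] with y hy hy2
    exact (F_eq_G l ⟨hy.1, hy2⟩).symm
  rcases eq_or_lt_of_le hx.2 with ha | ha
  · -- x = 1 - l
    subst ha
    rw [← Set.Ico_insert_right h0a.le]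
    rw [continuousWithinAt_insert_self]
    have hFa : Ffun l (1-l) = (π * l)/2 := by
      simp only [Ffun, if_neg (by linarith : ¬ (1-l:ℝ) ≤ 0), if_pos le_rfl]
    unfold ContinuousWithinAt
    rw [hFa]
    refine (G_tendsto_right l hl hl1).congr' ?_
    have h1 : ∀ᶠ y in 𝓝[Set.Ico (0:ℝ) (1-l)] (1-l), y ∈ Set.Ico (0:ℝ) (1-l) :=
      eventually_mem_nhdsWithin
    have h2 : ∀ᶠ y in 𝓝[Set.Ico (0:ℝ) (1-l)] (1-l), 0 < y :=
      eventually_nhdsWithin_of_eventually_nhds (eventually_gt_nhds h0a)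
    filter_upwards [h1, h2] with y hy hy2
    exact (F_eq_G l ⟨hy2, hy.2⟩).symm
  · -- interior
    have hxo : x ∈ Set.Ioo (0:ℝ) (1-l) := ⟨h0, ha⟩
    have hev : Gfun l =ᶠ[𝓝 x] Ffun l := by
      filter_upwards [isOpen_Ioo.mem_nhds hxo] with y hy
      exact (F_eq_G l hy).symm
    exact ((cont_G l hl hl1 hxo).congr hev).continuousWithinAt

lemma integrable_h (l : ℝ) (hl : 0 < l) (hl1 : l < 1) :
    IntervalIntegrable (fun x : ℝ =>
      Real.sqrt (l / (x * (1 - l - x))) - Real.arctan (Real.sqrt (l / (x * (1 - l - x)))))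
      volume 0 (1-l) := by
  have h0a : (0:ℝ) < 1-l := by linarith
  set K := Real.sqrt (2*l/(1-l)) with hKdef
  have hK0 : 0 ≤ K := Real.sqrt_nonneg _
  have r1 : IntervalIntegrable (fun x : ℝ => x ^ (-(1/2):ℝ)) volume 0 (1-l) :=
    intervalIntegrable_rpow' (by norm_num)
  have r2 : IntervalIntegrable (fun x : ℝ => (1-l-x) ^ (-(1/2):ℝ)) volume 0 (1-l) := by
    have := (intervalIntegrable_rpow' (a := 0) (b := 1-l) (r := -(1/2))
      (by norm_num)).comp_sub_left (1-l)
    simpa using this.symm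
  have hg : IntervalIntegrable
      (fun x : ℝ => K * (x ^ (-(1/2):ℝ) + (1-l-x) ^ (-(1/2):ℝ))) volume 0 (1-l) :=
    (r1.add r2).const_mul K
  refine hg.mono_fun ?_ ?_
  · apply Measurable.aestronglyMeasurable
    apply Measurable.sub
    · exact (Real.continuous_sqrt.measurable).comp
        ((measurable_const.div ((measurable_id.mul (measurable_const.sub measurable_id)))))
    · exact Real.continuous_arctan.measurable.comp
        ((Real.continuous_sqrt.measurable).comp
          ((measurable_const.div ((measurable_id.mul (measurable_const.sub measurable_id))))))
  · rw [Set.uIoc_of_le h0a.le]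
    have hae : ∀ᵐ x ∂(volume.restrict (Set.Ioc (0:ℝ) (1-l))), x ∈ Set.Ioc (0:ℝ) (1-l) :=
      ae_restrict_mem measurableSet_Ioc
    have hne : ∀ᵐ x ∂(volume.restrict (Set.Ioc (0:ℝ) (1-l))), x ≠ 1-l := by
      refine ae_restrict_of_ae ?_
      have hs : {x : ℝ | ¬ x ≠ 1-l} = {1-l} := by ext y; simp
      rw [ae_iff, hs]
      exact measure_singleton _
    filter_upwards [hae, hne] with x hx hxne
    have hx0 : 0 < x := hx.1
    have hxa : x < 1-l := lt_of_le_of_ne hx.2 hxne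
    have hax : 0 < 1-l-x := by linarith
    have hu : 0 < x * (1-l-x) := mul_pos hx0 hax
    set t := Real.sqrt (l / (x * (1 - l - x))) with htdef
    have ht0 : 0 ≤ t := Real.sqrt_nonneg _
    have hnorm : ‖t - Real.arctan t‖ ≤ t := by
      rw [Real.norm_eq_abs, abs_of_nonneg (sub_nonneg.2 (arctan_le_self' ht0))]
      linarith [arctan_nonneg ht0]
    have hterm2 : 0 ≤ (1-l-x) ^ (-(1/2):ℝ) := Real.rpow_nonneg hax.le _
    have hterm1 : 0 ≤ x ^ (-(1/2):ℝ) := Real.rpow_nonneg hx0.le _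
    refine hnorm.trans ?_
    rw [Real.norm_eq_abs, abs_of_nonneg (mul_nonneg hK0 (add_nonneg hterm1 hterm2))]
    have hC0 : (0:ℝ) ≤ 2*l/(1-l) := by positivity
    rcases le_total x ((1-l)/2) with hcase | hcase
    · have hineq : l / (x * (1-l-x)) ≤ (2*l/(1-l)) / x := by
        rw [div_le_div_iff₀ hu hx0, div_mul_eq_mul_div, le_div_iff₀ h0a]
        nlinarith [mul_pos hl hx0]
      have h1 : t ≤ Real.sqrt ((2*l/(1-l)) / x) := Real.sqrt_le_sqrt hineq
      have h2 : Real.sqrt ((2*l/(1-l)) / x) = K * x ^ (-(1/2):ℝ) := by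
        rw [Real.sqrt_div hC0, Real.rpow_neg hx0.le, ← Real.sqrt_eq_rpow, div_eq_mul_inv]
      nlinarith [mul_nonneg hK0 hterm2]
    · have hineq : l / (x * (1-l-x)) ≤ (2*l/(1-l)) / (1-l-x) := by
        rw [div_le_div_iff₀ hu hax, div_mul_eq_mul_div, le_div_iff₀ h0a]
        nlinarith [mul_pos hl hax]
      have h1 : t ≤ Real.sqrt ((2*l/(1-l)) / (1-l-x)) := Real.sqrt_le_sqrt hineq
      have h2 : Real.sqrt ((2*l/(1-l)) / (1-l-x)) = K * (1-l-x) ^ (-(1/2):ℝ) := by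
        rw [Real.sqrt_div hC0, Real.rpow_neg hax.le, ← Real.sqrt_eq_rpow, div_eq_mul_inv]
      nlinarith [mul_nonneg hK0 hterm1]

theorem length_first_segment_uniform
    (l : ℝ) (hl : 0 < l) (hl1 : l < 1) :
    ∫ x in Set.Ioo (0:ℝ) (1 - l),
        (Real.sqrt (l / (x * (1 - l - x)))
          - Real.arctan (Real.sqrt (l / (x * (1 - l - x)))))
    = π * l := by
  have h0a : (0:ℝ) ≤ 1 - l := by linarith
  rw [← MeasureTheory.integral_Ioc_eq_integral_Ioo,
    ← intervalIntegral.integral_of_le h0a]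
  have hder : ∀ x ∈ Set.Ioo (0:ℝ) (1-l), HasDerivWithinAt (Ffun l)
      (Real.sqrt (l / (x * (1 - l - x))) - Real.arctan (Real.sqrt (l / (x * (1 - l - x)))))
      (Set.Ioi x) x := by
    intro x hx
    have hev : Gfun l =ᶠ[𝓝 x] Ffun l := by
      filter_upwards [isOpen_Ioo.mem_nhds hx] with y hy
      exact (F_eq_G l hy).symm
    exact ((deriv_G l hl hl1 hx).congr_of_eventuallyEq hev.symm).hasDerivWithinAt
  have hFTC := intervalIntegral.integral_eq_sub_of_hasDeriv_right_of_le h0a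
    (cont_F l hl hl1) hder (integrable_h l hl hl1)
  rw [hFTC]
  have hFa : Ffun l (1-l) = (π * l)/2 := by
    simp only [Ffun, if_neg (by linarith : ¬ (1-l:ℝ) ≤ 0), if_pos le_rfl]
  have hF0 : Ffun l 0 = -(π * l)/2 := by simp [Ffun]
  rw [hFa, hF0]
  ring
end
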